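/- Soundness and completeness of system U: a term t of the λ!-calculus is typable in system U if and only if t →w-normalises to a term p ∈ no_wcf (a weak clash free normal form). Moreover, if Φ derives Γ ⊢ t : τ in system U and t →w* p with b dB-steps and e steps of kind s!/d!, then |Φ| ≥ b + e + |p|_w. -/

import Mathlib

/-! # The Bang Calculus Revisited: common definitions.

Terms are represented with de Bruijn indices, so that all the meta-level
substitutions are capture-avoiding by construction. -/

/-- Terms of the λ!-calculus.  `esub t u` is the explicit substitution
`t[0\u]`: the (anonymous) binder scopes over `t`, not over `u`. -/
inductive Tm : Type
  | var : ℕ → Tm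
  | app : Tm → Tm → Tm
  | lam : Tm → Tm
  | bang : Tm → Tm
  | der : Tm → Tm
  | esub : Tm → Tm → Tm
  deriving DecidableEq

namespace Tm

/-- lifting a renaming under a binder -/
def liftR (f : ℕ → ℕ) : ℕ → ℕ
  | 0 => 0
  | k + 1 => f k + 1

/-- renaming of free variables -/
def rename (f : ℕ → ℕ) : Tm → Tm
  | var k => var (f k)
  | app t u => app (rename f t) (rename f u)
  | lam t => lam (rename (liftR f) t)
  | bang t => bang (rename f t)
  | der t => der (rename f t)
  | esub t u => esub (rename (liftR f) t) (rename f u)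

/-- lifting a simultaneous substitution under a binder -/
def liftS (σ : ℕ → Tm) : ℕ → Tm
  | 0 => var 0
  | k + 1 => rename (· + 1) (σ k)

/-- simultaneous (capture-avoiding) substitution -/
def subst (σ : ℕ → Tm) : Tm → Tm
  | var k => σ k
  | app t u => app (subst σ t) (subst σ u)
  | lam t => lam (subst (liftS σ) t)
  | bang t => bang (subst σ t)
  | der t => der (subst σ t)
  | esub t u => esub (subst (liftS σ) t) (subst σ u)

/-- capture-avoiding substitution of `u` for the variable `0` of `t`,
where the result is placed under `n` extra binders (and `u` already lives
at that depth). -/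
def substIn (n : ℕ) (u : Tm) (t : Tm) : Tm :=
  subst (fun k => match k with
    | 0 => u
    | k + 1 => var (k + n)) t

/-- capture-avoiding meta-level substitution `t{0 := u}` -/
def subst0 (u : Tm) (t : Tm) : Tm := substIn 0 u t

/-- plugging a term into a list context `L ::= ◻ | L[x\t]`; the head of the
list is the argument of the outermost explicit substitution. -/
def plug : List Tm → Tm → Tm
  | [], s => s
  | e :: L, s => esub (plug L s) e

/-- the w-size of a term -/
def wsize : Tm → ℕ
  | var _ => 0
  | app t u => 1 + wsize t + wsize u
  | lam t => 1 + wsize t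
  | bang _ => 0
  | der t => 1 + wsize t
  | esub t u => 1 + wsize t + wsize u

end Tm

/-- the names of the three rewriting rules of the λ!-calculus -/
inductive Rule : Type
  | dB | sb | db
  deriving DecidableEq

open Tm in
/-- the three rewriting rules, applied at the root (at a distance) -/
inductive Root : Rule → Tm → Tm → Prop
  | dB (L : List Tm) (t u : Tm) :
      Root .dB (app (plug L (lam t)) u)
               (plug L (esub t (rename (· + L.length) u)))
  | sb (L : List Tm) (t u : Tm) :
      Root .sb (esub t (plug L (bang u))) (plug L (substIn L.length u t))
  | db (L : List Tm) (t : Tm) :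
      Root .db (der (plug L (bang t))) (plug L t)

/-- closure of each rule under weak contexts (no reduction under `bang`) -/
inductive Step : Rule → Tm → Tm → Prop
  | root {r : Rule} {t t' : Tm} : Root r t t' → Step r t t'
  | appL {r t t'} (u : Tm) : Step r t t' → Step r (Tm.app t u) (Tm.app t' u)
  | appR {r u u'} (t : Tm) : Step r u u' → Step r (Tm.app t u) (Tm.app t u')
  | lam {r t t'} : Step r t t' → Step r (Tm.lam t) (Tm.lam t')
  | der {r t t'} : Step r t t' → Step r (Tm.der t) (Tm.der t')
  | esubL {r t t'} (u : Tm) : Step r t t' → Step r (Tm.esub t u) (Tm.esub t' u)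
  | esubR {r u u'} (t : Tm) : Step r u u' → Step r (Tm.esub t u) (Tm.esub t u')

/-- the weak reduction `→w` of the λ!-calculus -/
def StepW (t t' : Tm) : Prop := ∃ r, Step r t t'

/-- counted weak reduction: `RedCnt t (b, e) u` holds iff `t →w* u` using `b`
dB-steps and `e` steps of kind s!/d!. -/
inductive RedCnt : Tm → ℕ × ℕ → Tm → Prop
  | refl (t : Tm) : RedCnt t (0, 0) t
  | db {t t₁ u : Tm} {b e : ℕ} :
      Step .dB t t₁ → RedCnt t₁ (b, e) u → RedCnt t (b + 1, e) u
  | ex {t t₁ u : Tm} {b e : ℕ} :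
      (Step .sb t t₁ ∨ Step .db t t₁) → RedCnt t₁ (b, e) u →
      RedCnt t (b, e + 1) u

mutual
  /-- neutral w-normal terms -/
  inductive NeW : Tm → Prop
    | var (k : ℕ) : NeW (Tm.var k)
    | app {t u : Tm} : NaW t → NoW u → NeW (Tm.app t u)
    | der {t : Tm} : NbW t → NeW (Tm.der t)
    | esub {t u : Tm} : NeW t → NbW u → NeW (Tm.esub t u)
  /-- neutral-abs w-normal terms -/
  inductive NaW : Tm → Prop
    | bang (t : Tm) : NaW (Tm.bang t)
    | ne {t : Tm} : NeW t → NaW t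
    | esub {t u : Tm} : NaW t → NbW u → NaW (Tm.esub t u)
  /-- neutral-bang w-normal terms -/
  inductive NbW : Tm → Prop
    | ne {t : Tm} : NeW t → NbW t
    | lam {t : Tm} : NoW t → NbW (Tm.lam t)
    | esub {t u : Tm} : NbW t → NbW u → NbW (Tm.esub t u)
  /-- w-normal terms -/
  inductive NoW : Tm → Prop
    | na {t : Tm} : NaW t → NoW t
    | nb {t : Tm} : NbW t → NoW t
end

/-- clashes -/
inductive Clash : Tm → Prop
  | appBang (L : List Tm) (t u : Tm) : Clash (Tm.app (Tm.plug L (Tm.bang t)) u)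
  | esubLam (L : List Tm) (t u : Tm) : Clash (Tm.esub t (Tm.plug L (Tm.lam u)))
  | derLam (L : List Tm) (u : Tm) : Clash (Tm.der (Tm.plug L (Tm.lam u)))
  | appLam (L : List Tm) (t u : Tm) : Clash (Tm.app t (Tm.plug L (Tm.lam u)))

/-- `WSub t s` holds iff `t = W⟨s⟩` for some weak context `W` -/
inductive WSub : Tm → Tm → Prop
  | refl (t : Tm) : WSub t t
  | appL {t s : Tm} (u : Tm) : WSub t s → WSub (Tm.app t u) s
  | appR {u s : Tm} (t : Tm) : WSub u s → WSub (Tm.app t u) s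
  | lam {t s : Tm} : WSub t s → WSub (Tm.lam t) s
  | der {t s : Tm} : WSub t s → WSub (Tm.der t) s
  | esubL {t s : Tm} (u : Tm) : WSub t s → WSub (Tm.esub t u) s
  | esubR {u s : Tm} (t : Tm) : WSub u s → WSub (Tm.esub t u) s

/-- weak clash freeness -/
def Wcf (t : Tm) : Prop := ¬ ∃ s, WSub t s ∧ Clash s

mutual
  /-- neutral weak clash free normal terms -/
  inductive NeCF : Tm → Prop
    | var (k : ℕ) : NeCF (Tm.var k)
    | app {t u : Tm} : NeCF t → NaCF u → NeCF (Tm.app t u)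
    | der {t : Tm} : NeCF t → NeCF (Tm.der t)
    | esub {t u : Tm} : NeCF t → NeCF u → NeCF (Tm.esub t u)
  /-- neutral-abs weak clash free normal terms -/
  inductive NaCF : Tm → Prop
    | bang (t : Tm) : NaCF (Tm.bang t)
    | ne {t : Tm} : NeCF t → NaCF t
    | esub {t u : Tm} : NaCF t → NeCF u → NaCF (Tm.esub t u)
  /-- neutral-bang weak clash free normal terms -/
  inductive NbCF : Tm → Prop
    | ne {t : Tm} : NeCF t → NbCF t
    | lam {t : Tm} : NoCF t → NbCF (Tm.lam t)
    | esub {t u : Tm} : NbCF t → NeCF u → NbCF (Tm.esub t u)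
  /-- weak clash free normal terms -/
  inductive NoCF : Tm → Prop
    | na {t : Tm} : NaCF t → NoCF t
    | nb {t : Tm} : NbCF t → NoCF t
end

/-- Types of system 𝒰: base types, multiset types and arrow types.  A
multiset type is given by a list of types (a representative of the multiset
it determines). -/
inductive Ty : Type
  | base : ℕ → Ty
  | mult : List Ty → Ty
  | arr : List Ty → Ty → Ty

/-- typing contexts: functions from (de Bruijn) variables to multiset types -/
abbrev Ctx := ℕ → Multiset Ty

/-- the context mapping `k` to `M` and anything else to the empty multiset -/
def Ctx.single (k : ℕ) (M : Multiset Ty) : Ctx := fun j => if j = k then M else 0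

/-- removing the (type of the) bound variable `0` from a context -/
def Ctx.tail (Γ : Ctx) : Ctx := fun k => Γ (k + 1)

/-- extending a context with a multiset type for a fresh variable `0` -/
def Ctx.cons (M : Multiset Ty) (Γ : Ctx) : Ctx := fun k =>
  match k with
  | 0 => M
  | k + 1 => Γ k

/-- Sized typing of system 𝒰: `DerU Γ t τ n` means that there is a derivation
of `Γ ⊢ t : τ` whose size (number of rules, not counting `bg`) is `n`. -/
inductive DerU : Ctx → Tm → Ty → ℕ → Prop
  | ax (k : ℕ) (σ : Ty) : DerU (Ctx.single k {σ}) (Tm.var k) σ 1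
  | app {Γ Δ : Ctx} {t u : Tm} {M : List Ty} {τ : Ty} {n m : ℕ} :
      DerU Γ t (Ty.arr M τ) n → DerU Δ u (Ty.mult M) m →
      DerU (Γ + Δ) (Tm.app t u) τ (n + m + 1)
  | abs {Γ : Ctx} {t : Tm} {τ : Ty} {n : ℕ} (M : List Ty) :
      DerU Γ t τ n → Multiset.ofList M = Γ 0 →
      DerU (Ctx.tail Γ) (Tm.lam t) (Ty.arr M τ) (n + 1)
  | es {Γ Δ : Ctx} {t u : Tm} {σ : Ty} {M : List Ty} {n m : ℕ} :
      DerU Γ t σ n → DerU Δ u (Ty.mult M) m → Multiset.ofList M = Γ 0 →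
      DerU (Ctx.tail Γ + Δ) (Tm.esub t u) σ (n + m + 1)
  | bg {t : Tm} (prs : List (Ctx × Ty × ℕ)) :
      (∀ p ∈ prs, DerU p.1 t p.2.1 p.2.2) →
      DerU ((prs.map (·.1)).sum) (Tm.bang t)
           (Ty.mult (prs.map (·.2.1))) ((prs.map (·.2.2)).sum)
  | dr {Γ : Ctx} {t : Tm} {σ : Ty} {n : ℕ} :
      DerU Γ t (Ty.mult [σ]) n → DerU Γ (Tm.der t) σ (n + 1)

/-! ## The source λ-calculus with explicit substitutions (CBN / CBV) -/

/-- terms of the λ-calculus with explicit substitutions (de Bruijn) -/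
inductive Lm : Type
  | var : ℕ → Lm
  | app : Lm → Lm → Lm
  | lam : Lm → Lm
  | esub : Lm → Lm → Lm
  deriving DecidableEq

namespace Lm

def liftR (f : ℕ → ℕ) : ℕ → ℕ
  | 0 => 0
  | k + 1 => f k + 1

def rename (f : ℕ → ℕ) : Lm → Lm
  | var k => var (f k)
  | app t u => app (rename f t) (rename f u)
  | lam t => lam (rename (liftR f) t)
  | esub t u => esub (rename (liftR f) t) (rename f u)

def liftS (σ : ℕ → Lm) : ℕ → Lm
  | 0 => var 0
  | k + 1 => rename (· + 1) (σ k)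

def subst (σ : ℕ → Lm) : Lm → Lm
  | var k => σ k
  | app t u => app (subst σ t) (subst σ u)
  | lam t => lam (subst (liftS σ) t)
  | esub t u => esub (subst (liftS σ) t) (subst σ u)

def substIn (n : ℕ) (u : Lm) (t : Lm) : Lm :=
  subst (fun k => match k with
    | 0 => u
    | k + 1 => var (k + n)) t

/-- capture-avoiding meta-level substitution `t{0 := u}` -/
def subst0 (u : Lm) (t : Lm) : Lm := substIn 0 u t

def plug : List Lm → Lm → Lm
  | [], s => s
  | e :: L, s => esub (plug L s) e

/-- values -/
def IsVal : Lm → Prop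
  | var _ => True
  | lam _ => True
  | _ => False

/-- the n-size of a term -/
def nsize : Lm → ℕ
  | var _ => 0
  | lam t => 1 + nsize t
  | app t _ => 1 + nsize t
  | esub t _ => 1 + nsize t

/-- the v-size of a term -/
def vsize : Lm → ℕ
  | var _ => 0
  | lam _ => 0
  | app t u => 1 + vsize t + vsize u
  | esub t u => 1 + vsize t + vsize u

end Lm

/-- names of the CBN rules -/
inductive NRule : Type
  | dB | s
  deriving DecidableEq

/-- call-by-name reduction (closure of dB and s under CBN contexts) -/
inductive StepN : NRule → Lm → Lm → Prop
  | dB (L : List Lm) (t u : Lm) :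
      StepN .dB (Lm.app (Lm.plug L (Lm.lam t)) u)
                (Lm.plug L (Lm.esub t (Lm.rename (· + L.length) u)))
  | s (t u : Lm) : StepN .s (Lm.esub t u) (Lm.subst0 u t)
  | appL {r t t'} (u : Lm) : StepN r t t' → StepN r (Lm.app t u) (Lm.app t' u)
  | lam {r t t'} : StepN r t t' → StepN r (Lm.lam t) (Lm.lam t')
  | esubL {r t t'} (u : Lm) : StepN r t t' → StepN r (Lm.esub t u) (Lm.esub t' u)

/-- names of the CBV rules -/
inductive VRule : Type
  | dB | sv
  deriving DecidableEq

/-- call-by-value reduction (closure of dB and sv under CBV contexts) -/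
inductive StepV : VRule → Lm → Lm → Prop
  | dB (L : List Lm) (t u : Lm) :
      StepV .dB (Lm.app (Lm.plug L (Lm.lam t)) u)
                (Lm.plug L (Lm.esub t (Lm.rename (· + L.length) u)))
  | sv (L : List Lm) (t v : Lm) (hv : Lm.IsVal v) :
      StepV .sv (Lm.esub t (Lm.plug L v)) (Lm.plug L (Lm.substIn L.length v t))
  | appL {r t t'} (u : Lm) : StepV r t t' → StepV r (Lm.app t u) (Lm.app t' u)
  | appR {r u u'} (t : Lm) : StepV r u u' → StepV r (Lm.app t u) (Lm.app t u')
  | esubL {r t t'} (u : Lm) : StepV r t t' → StepV r (Lm.esub t u) (Lm.esub t' u)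
  | esubR {r u u'} (t : Lm) : StepV r u u' → StepV r (Lm.esub t u) (Lm.esub t u')

mutual
  /-- CBN neutral terms -/
  inductive NeN : Lm → Prop
    | var (k : ℕ) : NeN (Lm.var k)
    | app {t : Lm} (u : Lm) : NeN t → NeN (Lm.app t u)
  /-- CBN normal terms -/
  inductive NoN : Lm → Prop
    | lam {t : Lm} : NoN t → NoN (Lm.lam t)
    | ne {t : Lm} : NeN t → NoN t
end

mutual
  /-- CBV (substituted) variables -/
  inductive VrV : Lm → Prop
    | var (k : ℕ) : VrV (Lm.var k)
    | esub {t u : Lm} : VrV t → NeV u → VrV (Lm.esub t u)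
  /-- CBV neutral terms -/
  inductive NeV : Lm → Prop
    | app₁ {t u : Lm} : VrV t → NoV u → NeV (Lm.app t u)
    | app₂ {t u : Lm} : NeV t → NoV u → NeV (Lm.app t u)
    | esub {t u : Lm} : NeV t → NeV u → NeV (Lm.esub t u)
  /-- CBV normal terms -/
  inductive NoV : Lm → Prop
    | lam (t : Lm) : NoV (Lm.lam t)
    | vr {t : Lm} : VrV t → NoV t
    | ne {t : Lm} : NeV t → NoV t
    | esub {t u : Lm} : NoV t → NeV u → NoV (Lm.esub t u)
end

/-- counted CBN reduction, recording the number of dB- and s-steps -/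
inductive RedCntN : Lm → ℕ × ℕ → Lm → Prop
  | refl (t : Lm) : RedCntN t (0, 0) t
  | db {t t₁ u : Lm} {b e : ℕ} :
      StepN .dB t t₁ → RedCntN t₁ (b, e) u → RedCntN t (b + 1, e) u
  | s {t t₁ u : Lm} {b e : ℕ} :
      StepN .s t t₁ → RedCntN t₁ (b, e) u → RedCntN t (b, e + 1) u

/-- counted CBV reduction, recording the number of dB- and sv-steps -/
inductive RedCntV : Lm → ℕ × ℕ → Lm → Prop
  | refl (t : Lm) : RedCntV t (0, 0) t
  | db {t t₁ u : Lm} {b e : ℕ} :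
      StepV .dB t t₁ → RedCntV t₁ (b, e) u → RedCntV t (b + 1, e) u
  | sv {t t₁ u : Lm} {b e : ℕ} :
      StepV .sv t t₁ → RedCntV t₁ (b, e) u → RedCntV t (b, e + 1) u

/-- the CBN embedding into the λ!-calculus -/
def cbn : Lm → Tm
  | .var k => .var k
  | .lam t => .lam (cbn t)
  | .app t u => .app (cbn t) (.bang (cbn u))
  | .esub t u => .esub (cbn t) (.bang (cbn u))

/-- `deBang t = some s'` iff `t = L⟨!s⟩` and `s' = L⟨s⟩` -/
def deBang : Tm → Option Tm
  | .bang s => some s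
  | .esub t e => (deBang t).map (fun s => Tm.esub s e)
  | _ => none

/-- the CBV embedding into the λ!-calculus -/
def cbv : Lm → Tm
  | .var k => .bang (.var k)
  | .lam t => .bang (.lam (cbv t))
  | .app t u =>
      match deBang (cbv t) with
      | some r => Tm.app r (cbv u)
      | none => Tm.app (.der (cbv t)) (cbv u)
  | .esub t u => .esub (cbv t) (cbv u)

/-- Sized typing of system 𝒩 (call-by-name): `DerN Γ t τ n` means that there
is a derivation of `Γ ⊢ t : τ` of size `n` (counting all rules). -/
inductive DerN : Ctx → Lm → Ty → ℕ → Prop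
  | ax (k : ℕ) (σ : Ty) : DerN (Ctx.single k {σ}) (Lm.var k) σ 1
  | app {Γ : Ctx} {t u : Lm} {τ : Ty} {n : ℕ} (prs : List (Ctx × Ty × ℕ)) :
      DerN Γ t (Ty.arr (prs.map (·.2.1)) τ) n →
      (∀ p ∈ prs, DerN p.1 u p.2.1 p.2.2) →
      DerN (Γ + (prs.map (·.1)).sum) (Lm.app t u) τ
           (n + (prs.map (·.2.2)).sum + 1)
  | abs {Γ : Ctx} {t : Lm} {τ : Ty} {n : ℕ} (M : List Ty) :
      DerN Γ t τ n → Multiset.ofList M = Γ 0 →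
      DerN (Ctx.tail Γ) (Lm.lam t) (Ty.arr M τ) (n + 1)
  | es {Γ : Ctx} {t u : Lm} {τ : Ty} {n : ℕ} (prs : List (Ctx × Ty × ℕ)) :
      DerN Γ t τ n →
      Multiset.ofList (prs.map (·.2.1)) = Γ 0 →
      (∀ p ∈ prs, DerN p.1 u p.2.1 p.2.2) →
      DerN (Ctx.tail Γ + (prs.map (·.1)).sum) (Lm.esub t u) τ
           (n + (prs.map (·.2.2)).sum + 1)

/-- Sized typing of system 𝒱 (call-by-value): `DerV Γ t τ n` means that there
is a derivation of `Γ ⊢ t : τ` of size `n` (each rule counts 1, except that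
`ax` counts the cardinal of its multiset and `abs` contributes the sizes of
its premises plus the number of premises). -/
inductive DerV : Ctx → Lm → Ty → ℕ → Prop
  | ax (k : ℕ) (M : List Ty) :
      DerV (Ctx.single k (Multiset.ofList M)) (Lm.var k) (Ty.mult M) M.length
  | es {Γ Δ : Ctx} {t u : Lm} {σ : Ty} {M : List Ty} {n m : ℕ} :
      DerV Γ t σ n → DerV Δ u (Ty.mult M) m → Multiset.ofList M = Γ 0 →
      DerV (Ctx.tail Γ + Δ) (Lm.esub t u) σ (n + m + 1)
  | abs {t : Lm} (prs : List (Ctx × List Ty × Ty × ℕ)) :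
      (∀ p ∈ prs, DerV p.1 t p.2.2.1 p.2.2.2) →
      (∀ p ∈ prs, Multiset.ofList p.2.1 = p.1 0) →
      DerV ((prs.map (fun p => Ctx.tail p.1)).sum) (Lm.lam t)
           (Ty.mult (prs.map (fun p => Ty.arr p.2.1 p.2.2.1)))
           ((prs.map (·.2.2.2)).sum + prs.length)
  | app {Γ Δ : Ctx} {t u : Lm} {M : List Ty} {τ : Ty} {n m : ℕ} :
      DerV Γ t (Ty.mult [Ty.arr M τ]) n → DerV Δ u (Ty.mult M) m →
      DerV (Γ + Δ) (Lm.app t u) τ (n + m + 1)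



open Tm

/-! ### Syntactic lemmas on renaming and substitution -/

theorem liftR_ext {f g : ℕ → ℕ} (h : ∀ k, f k = g k) : ∀ k, liftR f k = liftR g k
  | 0 => rfl
  | k + 1 => by simp [liftR, h]

theorem rename_ext {f g : ℕ → ℕ} (h : ∀ k, f k = g k) : ∀ t, rename f t = rename g t
  | .var k => by simp [rename, h]
  | .app t u => by simp [rename, rename_ext h t, rename_ext h u]
  | .lam t => by simp [rename, rename_ext (liftR_ext h) t]
  | .bang t => by simp [rename, rename_ext h t]
  | .der t => by simp [rename, rename_ext h t]
  | .esub t u => by simp [rename, rename_ext (liftR_ext h) t, rename_ext h u]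

theorem liftR_comp (f g : ℕ → ℕ) : ∀ k, liftR f (liftR g k) = liftR (f ∘ g) k
  | 0 => rfl
  | _ + 1 => rfl

theorem rename_comp (f g : ℕ → ℕ) : ∀ t, rename f (rename g t) = rename (f ∘ g) t
  | .var k => rfl
  | .app t u => by simp only [rename]; rw [rename_comp f g t, rename_comp f g u]
  | .lam t => by
      simp only [rename]
      rw [rename_comp (liftR f) (liftR g) t,
        rename_ext (f := liftR f ∘ liftR g) (liftR_comp f g) t]
  | .bang t => by simp only [rename]; rw [rename_comp f g t]
  | .der t => by simp only [rename]; rw [rename_comp f g t]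
  | .esub t u => by
      simp only [rename]
      rw [rename_comp (liftR f) (liftR g) t,
        rename_ext (f := liftR f ∘ liftR g) (liftR_comp f g) t, rename_comp f g u]

theorem liftR_id {f : ℕ → ℕ} (h : ∀ k, f k = k) : ∀ k, liftR f k = k
  | 0 => rfl
  | k + 1 => by simp [liftR, h]

theorem rename_id {f : ℕ → ℕ} (h : ∀ k, f k = k) : ∀ t, rename f t = t
  | .var k => by simp [rename, h]
  | .app t u => by simp [rename, rename_id h t, rename_id h u]
  | .lam t => by simp [rename, rename_id (liftR_id h) t]
  | .bang t => by simp [rename, rename_id h t]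
  | .der t => by simp [rename, rename_id h t]
  | .esub t u => by simp [rename, rename_id (liftR_id h) t, rename_id h u]

theorem liftS_ext {σ σ' : ℕ → Tm} (h : ∀ k, σ k = σ' k) : ∀ k, liftS σ k = liftS σ' k
  | 0 => rfl
  | k + 1 => by simp [liftS, h]

theorem subst_ext {σ σ' : ℕ → Tm} (h : ∀ k, σ k = σ' k) : ∀ t, subst σ t = subst σ' t
  | .var k => by simp [subst, h]
  | .app t u => by simp [subst, subst_ext h t, subst_ext h u]
  | .lam t => by simp [subst, subst_ext (liftS_ext h) t]
  | .bang t => by simp [subst, subst_ext h t]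
  | .der t => by simp [subst, subst_ext h t]
  | .esub t u => by simp [subst, subst_ext (liftS_ext h) t, subst_ext h u]

theorem liftR_injective {f : ℕ → ℕ} (hf : Function.Injective f) :
    Function.Injective (liftR f) := by
  intro a b h
  match a, b with
  | 0, 0 => rfl
  | 0, b + 1 => simp [liftR] at h
  | a + 1, 0 => simp [liftR] at h
  | a + 1, b + 1 =>
    simp only [liftR, Nat.add_right_cancel_iff] at h
    exact congrArg Nat.succ (hf h)

theorem addR_injective (m : ℕ) : Function.Injective (· + m) := fun a b h => by simpa using h

/-- the single-variable substitution at position `j` with shift `n` -/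
def sVar (j n : ℕ) (u : Tm) : ℕ → Tm := fun k =>
  if k < j then .var k else if k = j then rename (· + j) u else .var (k - 1 + n)

theorem sVar_lt {j k : ℕ} (n : ℕ) (u : Tm) (h : k < j) : sVar j n u k = .var k := by
  unfold sVar; rw [if_pos h]

theorem sVar_self (j n : ℕ) (u : Tm) : sVar j n u j = rename (· + j) u := by
  unfold sVar; rw [if_neg (lt_irrefl j), if_pos rfl]

theorem sVar_gt {j k : ℕ} (n : ℕ) (u : Tm) (h : j < k) : sVar j n u k = .var (k - 1 + n) := by
  unfold sVar; rw [if_neg (by omega), if_neg (by omega)]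

theorem liftS_sVar (j n : ℕ) (u : Tm) : ∀ k, liftS (sVar j n u) k = sVar (j + 1) n u k
  | 0 => by rw [sVar_lt n u (Nat.succ_pos j)]; rfl
  | k + 1 => by
      simp only [liftS]
      rcases lt_trichotomy k j with h | h | h
      · rw [sVar_lt n u h, sVar_lt n u (by omega : k + 1 < j + 1)]; rfl
      · subst h
        rw [sVar_self, show sVar (k + 1) n u (k + 1) = rename (· + (k + 1)) u from
          sVar_self (k + 1) n u, rename_comp]
        exact rename_ext (fun x => by show x + k + 1 = x + (k + 1); omega) u
      · rw [sVar_gt n u h, sVar_gt n u (by omega : j + 1 < k + 1)]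
        simp only [rename]
        congr 1
        omega

theorem subst_sVar_zero (n : ℕ) (u t : Tm) : subst (sVar 0 n u) t = Tm.substIn n u t := by
  apply subst_ext
  intro k
  cases k with
  | zero => rw [sVar_self]; exact rename_id (by simp) u
  | succ k => rw [sVar_gt n u (Nat.succ_pos k)]; simp [Tm.substIn]

/-! ### Context renaming -/

namespace Ctx

open Classical in
noncomputable def ren (f : ℕ → ℕ) (Γ : Ctx) : Ctx := fun k =>
  if h : ∃ j, f j = k then Γ h.choose else 0

theorem ren_apply {f : ℕ → ℕ} (hf : Function.Injective f) (Γ : Ctx) (j : ℕ) :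
    ren f Γ (f j) = Γ j := by
  have h : ∃ i, f i = f j := ⟨j, rfl⟩
  simp only [ren, dif_pos h]
  rw [hf h.choose_spec]

theorem ren_not_range {f : ℕ → ℕ} {k : ℕ} (h : ∀ j, f j ≠ k) (Γ : Ctx) :
    ren f Γ k = 0 := by
  simp only [ren, dif_neg (not_exists.mpr h)]

theorem ren_add (f : ℕ → ℕ) (Γ Δ : Ctx) : ren f (Γ + Δ) = ren f Γ + ren f Δ := by
  funext k
  by_cases h : ∃ j, f j = k
  · simp only [ren, Pi.add_apply, dif_pos h]
  · simp only [ren, Pi.add_apply, dif_neg h]; simp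

theorem ren_zero (f : ℕ → ℕ) : ren f (0 : Ctx) = 0 := by
  funext k
  by_cases h : ∃ j, f j = k
  · simp only [ren, dif_pos h]; rfl
  · simp only [ren, dif_neg h]; rfl

theorem ren_single {f : ℕ → ℕ} (hf : Function.Injective f) (k : ℕ) (M : Multiset Ty) :
    ren f (single k M) = single (f k) M := by
  funext i
  by_cases h : ∃ j, f j = i
  · obtain ⟨j, rfl⟩ := h
    rw [ren_apply hf]
    by_cases hjk : j = k
    · subst hjk; simp [single]
    · have : f j ≠ f k := fun h => hjk (hf h)
      simp [single, hjk, this]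
  · push_neg at h
    rw [ren_not_range h]
    have : f k ≠ i := h k
    show (0 : Multiset Ty) = if i = f k then M else 0
    rw [if_neg (fun hik : i = f k => this hik.symm)]

theorem ren_congr {f g : ℕ → ℕ} (h : ∀ k, f k = g k) (Γ : Ctx) : ren f Γ = ren g Γ := by
  rw [funext h]

theorem ren_id {f : ℕ → ℕ} (h : ∀ k, f k = k) (Γ : Ctx) : ren f Γ = Γ := by
  have hid : f = id := funext h
  subst hid
  funext k
  exact ren_apply (fun a b h => h) Γ k

theorem ren_liftR_zero {f : ℕ → ℕ} (hf : Function.Injective f) (Γ : Ctx) :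
    ren (Tm.liftR f) Γ 0 = Γ 0 :=
  ren_apply (liftR_injective hf) Γ 0

theorem tail_ren_liftR {f : ℕ → ℕ} (hf : Function.Injective f) (Γ : Ctx) :
    tail (ren (Tm.liftR f) Γ) = ren f (tail Γ) := by
  funext k
  show ren (Tm.liftR f) Γ (k + 1) = ren f (tail Γ) k
  by_cases h : ∃ j, f j = k
  · obtain ⟨j, rfl⟩ := h
    have e1 : ren (Tm.liftR f) Γ (Tm.liftR f (j + 1)) = Γ (j + 1) :=
      ren_apply (liftR_injective hf) Γ (j + 1)
    have e2 : ren f (tail Γ) (f j) = Γ (j + 1) := ren_apply hf (tail Γ) j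
    exact e1.trans e2.symm
  · push_neg at h
    rw [ren_not_range h]
    have : ∀ j, Tm.liftR f j ≠ k + 1 := by
      intro j hj
      cases j with
      | zero => simp [Tm.liftR] at hj
      | succ i => exact h i (by simpa [Tm.liftR] using hj)
    exact ren_not_range this Γ

theorem ren_comp {f g : ℕ → ℕ} (hf : Function.Injective f) (hg : Function.Injective g)
    (Γ : Ctx) : ren f (ren g Γ) = ren (f ∘ g) Γ := by
  funext k
  by_cases h : ∃ j, f (g j) = k
  · obtain ⟨j, rfl⟩ := h
    have e1 : ren (f ∘ g) Γ ((f ∘ g) j) = Γ j := ren_apply (hf.comp hg) Γ j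
    have e2 : ren f (ren g Γ) (f (g j)) = ren g Γ (g j) := ren_apply hf _ (g j)
    have e3 : ren g Γ (g j) = Γ j := ren_apply hg Γ j
    exact (e2.trans e3).trans e1.symm
  · push_neg at h
    rw [ren_not_range (f := f ∘ g) h]
    by_cases h2 : ∃ i, f i = k
    · obtain ⟨i, rfl⟩ := h2
      have e2 : ren f (ren g Γ) (f i) = ren g Γ i := ren_apply hf _ i
      rw [e2]
      exact ren_not_range (fun j hj => h j (by rw [hj])) Γ
    · push_neg at h2
      exact ren_not_range h2 _

theorem tail_add (Γ Δ : Ctx) : tail (Γ + Δ) = tail Γ + tail Δ := rfl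

theorem tail_ren_succ (m : ℕ) (Γ : Ctx) : tail (ren (· + (m + 1)) Γ) = ren (· + m) Γ := by
  funext k
  show ren (· + (m + 1)) Γ (k + 1) = ren (· + m) Γ k
  by_cases h : ∃ j, j + m = k
  · obtain ⟨j, rfl⟩ := h
    have e1 : ren (· + (m + 1)) Γ (j + (m + 1)) = Γ j := ren_apply (addR_injective _) Γ j
    have e2 : ren (· + m) Γ (j + m) = Γ j := ren_apply (addR_injective _) Γ j
    rw [show j + m + 1 = j + (m + 1) by omega, e1, e2]
  · push_neg at h
    rw [ren_not_range h, ren_not_range (fun j hj => h j (by omega)) Γ]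

theorem ren_succ_zero (m : ℕ) (Γ : Ctx) : ren (· + (m + 1)) Γ 0 = 0 :=
  ren_not_range (fun j => by omega) Γ

end Ctx


open Tm

namespace Ctx

theorem sum_apply (l : List Ctx) (k : ℕ) : l.sum k = (l.map (fun Γ => Γ k)).sum := by
  induction l with
  | nil => rfl
  | cons a l ih => simp [List.sum_cons, ih]

theorem ren_sum (f : ℕ → ℕ) (l : List Ctx) : ren f l.sum = (l.map (ren f)).sum := by
  induction l with
  | nil => simp [ren_zero]
  | cons a l ih => simp [List.sum_cons, ren_add, ih]

theorem tail_sum (l : List Ctx) : tail l.sum = (l.map tail).sum := by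
  induction l with
  | nil => rfl
  | cons a l ih => simp [List.sum_cons, ← ih]; rfl

end Ctx

/-! ### Renaming preserves typing -/

theorem DerU.ren {Γ : Ctx} {t : Tm} {σ : Ty} {n : ℕ} (h : DerU Γ t σ n) :
    ∀ {f : ℕ → ℕ}, Function.Injective f → DerU (Ctx.ren f Γ) (rename f t) σ n := by
  induction h with
  | ax k σ =>
      intro f hf
      rw [Ctx.ren_single hf]
      exact DerU.ax (f k) σ
  | app h1 h2 ih1 ih2 =>
      intro f hf
      rw [Ctx.ren_add]
      exact DerU.app (ih1 hf) (ih2 hf)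
  | abs M h hM ih =>
      intro f hf
      rw [← Ctx.tail_ren_liftR hf]
      exact DerU.abs M (ih (liftR_injective hf)) (by rw [hM, Ctx.ren_liftR_zero hf])
  | es h1 h2 hM ih1 ih2 =>
      intro f hf
      rw [Ctx.ren_add, ← Ctx.tail_ren_liftR hf]
      exact DerU.es (ih1 (liftR_injective hf)) (ih2 hf)
        (by rw [hM, Ctx.ren_liftR_zero hf])
  | bg prs h ih =>
      intro f hf
      have hbg := DerU.bg (prs.map (fun p => (Ctx.ren f p.1, p.2)))
        (fun p hp => by
          simp only [List.mem_map] at hp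
          obtain ⟨q, hq, rfl⟩ := hp
          exact ih q hq hf)
      simp only [List.map_map] at hbg
      have e1 : ((prs.map (fun p => (Ctx.ren f p.1, p.2))).map (·.1)).sum
          = Ctx.ren f ((prs.map (·.1)).sum) := by
        rw [Ctx.ren_sum, List.map_map, List.map_map]; rfl
      have e2 : ((prs.map (fun p => (Ctx.ren f p.1, p.2))).map (·.2.1))
          = prs.map (·.2.1) := by rw [List.map_map]; rfl
      have e3 : ((prs.map (fun p => (Ctx.ren f p.1, p.2))).map (·.2.2))
          = prs.map (·.2.2) := by rw [List.map_map]; rfl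
      have := DerU.bg (prs.map (fun p => (Ctx.ren f p.1, p.2)))
        (fun p hp => by
          simp only [List.mem_map] at hp
          obtain ⟨q, hq, rfl⟩ := hp
          exact ih q hq hf)
      rw [e1, e2, e3] at this
      exact this
  | dr h ih =>
      intro f hf
      exact DerU.dr (ih hf)

/-- anti-renaming -/
theorem derU_rename_inv : ∀ (t : Tm) {f : ℕ → ℕ}, Function.Injective f →
    ∀ {Γ' : Ctx} {σ : Ty} {m : ℕ}, DerU Γ' (rename f t) σ m →
    ∃ Γ, Γ' = Ctx.ren f Γ ∧ DerU Γ t σ m := by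
  intro t
  induction t with
  | var k =>
      intro f hf Γ' σ m h
      simp only [rename] at h
      cases h
      exact ⟨Ctx.single k {σ}, (Ctx.ren_single hf k _).symm, DerU.ax k σ⟩
  | app t₁ t₂ ih1 ih2 =>
      intro f hf Γ' σ m h
      simp only [rename] at h
      cases h with
      | app h1 h2 =>
          obtain ⟨Γ₁, rfl, d1⟩ := ih1 hf h1
          obtain ⟨Γ₂, rfl, d2⟩ := ih2 hf h2
          exact ⟨Γ₁ + Γ₂, (Ctx.ren_add f Γ₁ Γ₂).symm, DerU.app d1 d2⟩
  | lam t ih =>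
      intro f hf Γ' σ m h
      simp only [rename] at h
      cases h with
      | abs M h hM =>
          obtain ⟨Γ, rfl, d⟩ := ih (liftR_injective hf) h
          exact ⟨Ctx.tail Γ, Ctx.tail_ren_liftR hf Γ,
            DerU.abs M d (by rw [hM, Ctx.ren_liftR_zero hf])⟩
  | bang t ih =>
      intro f hf Γ' σ m h
      simp only [rename] at h
      cases h with
      | bg prs hprs =>
          have key : ∀ l : List (Ctx × Ty × ℕ),
              (∀ p ∈ l, DerU p.1 (rename f t) p.2.1 p.2.2) →
              ∃ l' : List (Ctx × Ty × ℕ), l = l'.map (fun p => (Ctx.ren f p.1, p.2)) ∧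
                ∀ p ∈ l', DerU p.1 t p.2.1 p.2.2 := by
            intro l
            induction l with
            | nil =>
                intro _
                refine ⟨[], ?_, ?_⟩
                · rfl
                · intro p hp
                  exact (List.not_mem_nil hp).elim
            | cons a l ihl =>
                intro hl
                obtain ⟨l', rfl, hl'⟩ := ihl (fun p hp => hl p (List.mem_cons_of_mem a hp))
                obtain ⟨Γa, ha, da⟩ := ih hf (hl a List.mem_cons_self)
                refine ⟨(Γa, a.2) :: l', ?_, ?_⟩
                · simp only [List.map_cons, List.cons.injEq]
                  refine ⟨?_, by simp⟩
                  rw [← ha]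
                · intro p hp
                  rcases List.mem_cons.mp hp with rfl | hp
                  · exact da
                  · exact hl' p hp
          obtain ⟨prs', rfl, hprs'⟩ := key prs hprs
          refine ⟨(prs'.map (·.1)).sum, ?_, ?_⟩
          · rw [Ctx.ren_sum, List.map_map, List.map_map]; rfl
          · have := DerU.bg prs' hprs'
            have e2 : (prs'.map (fun p => (Ctx.ren f p.1, p.2))).map (·.2.1)
                = prs'.map (·.2.1) := by rw [List.map_map]; rfl
            have e3 : (prs'.map (fun p => (Ctx.ren f p.1, p.2))).map (·.2.2)
                = prs'.map (·.2.2) := by rw [List.map_map]; rfl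
            rw [e2, e3]
            exact this
  | der t ih =>
      intro f hf Γ' σ m h
      simp only [rename] at h
      cases h with
      | dr h =>
          obtain ⟨Γ, rfl, d⟩ := ih hf h
          exact ⟨Γ, rfl, DerU.dr d⟩
  | esub t u iht ihu =>
      intro f hf Γ' σ m h
      simp only [rename] at h
      cases h with
      | es h1 h2 hM =>
          obtain ⟨Γ, rfl, d1⟩ := iht (liftR_injective hf) h1
          obtain ⟨Δ, rfl, d2⟩ := ihu hf h2
          exact ⟨Ctx.tail Γ + Δ,
            by rw [Ctx.ren_add, Ctx.tail_ren_liftR hf],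
            DerU.es d1 d2 (by rw [hM, Ctx.ren_liftR_zero hf])⟩

/-! ### Bundles of derivations -/

/-- `Bundle u M Δ S`: one derivation of `u` per element of `M`, with
contexts summing to `Δ` and sizes summing to `S`. -/
inductive Bundle (u : Tm) : Multiset Ty → Ctx → ℕ → Prop
  | nil : Bundle u 0 0 0
  | cons {τ : Ty} {M : Multiset Ty} {Γ Δ : Ctx} {n S : ℕ} :
      DerU Γ u τ n → Bundle u M Δ S → Bundle u (τ ::ₘ M) (Γ + Δ) (n + S)

theorem Bundle.zero_inv {u : Tm} {Δ : Ctx} {S : ℕ} (h : Bundle u 0 Δ S) :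
    Δ = 0 ∧ S = 0 := by
  generalize hM : (0 : Multiset Ty) = M₀ at h
  cases h with
  | nil => exact ⟨rfl, rfl⟩
  | cons d hb => exact absurd hM (by simp)

theorem Bundle.append {u : Tm} {M₁ M₂ : Multiset Ty} {Δ₁ Δ₂ : Ctx} {S₁ S₂ : ℕ}
    (h1 : Bundle u M₁ Δ₁ S₁) (h2 : Bundle u M₂ Δ₂ S₂) :
    Bundle u (M₁ + M₂) (Δ₁ + Δ₂) (S₁ + S₂) := by
  induction h1 with
  | nil => simpa using h2
  | cons d hb ih =>
      rw [Multiset.cons_add, add_assoc, add_assoc]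
      exact Bundle.cons d ih

theorem Bundle.extract {u : Tm} {τ : Ty} {M : Multiset Ty} {Δ : Ctx} {S : ℕ}
    (h : Bundle u (τ ::ₘ M) Δ S) :
    ∃ Γ n Δ' S', DerU Γ u τ n ∧ Bundle u M Δ' S' ∧ Δ = Γ + Δ' ∧ S = n + S' := by
  generalize hM : τ ::ₘ M = M₀ at h
  induction h generalizing τ M with
  | nil => exact absurd hM (by simp)
  | @cons τ' M' Γ Δ' n S' d hb ih =>
      rcases (Multiset.cons_eq_cons.mp hM.symm) with ⟨rfl, rfl⟩ | ⟨hne, cs, rfl, rfl⟩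
      · exact ⟨Γ, n, Δ', S', d, hb, rfl, rfl⟩
      · obtain ⟨Γ₂, n₂, Δ₂, S₂, d₂, hb₂, rfl, rfl⟩ := ih rfl
        exact ⟨Γ₂, n₂, Γ + Δ₂, n + S₂, d₂, Bundle.cons d hb₂,
          by rw [← add_assoc, ← add_assoc, add_comm Γ Γ₂], by omega⟩

theorem Bundle.split {u : Tm} {M₁ M₂ : Multiset Ty} {Δ : Ctx} {S : ℕ}
    (h : Bundle u (M₁ + M₂) Δ S) :
    ∃ Δ₁ S₁ Δ₂ S₂, Bundle u M₁ Δ₁ S₁ ∧ Bundle u M₂ Δ₂ S₂ ∧ Δ = Δ₁ + Δ₂ ∧ S = S₁ + S₂ := by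
  induction M₁ using Multiset.induction generalizing Δ S with
  | empty =>
      refine ⟨0, 0, Δ, S, Bundle.nil, ?_, by simp, by simp⟩
      simpa using h
  | cons τ M₁ ih =>
      rw [Multiset.cons_add] at h
      obtain ⟨Γ, n, Δ', S', d, hb, rfl, rfl⟩ := h.extract
      obtain ⟨Δ₁, S₁, Δ₂, S₂, h1, h2, rfl, rfl⟩ := ih hb
      exact ⟨Γ + Δ₁, n + S₁, Δ₂, S₂, Bundle.cons d h1, h2, by rw [add_assoc], by omega⟩

theorem Bundle.ofList {u : Tm} (prs : List (Ctx × Ty × ℕ))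
    (h : ∀ p ∈ prs, DerU p.1 u p.2.1 p.2.2) :
    Bundle u (Multiset.ofList (prs.map (·.2.1))) ((prs.map (·.1)).sum)
      ((prs.map (·.2.2)).sum) := by
  induction prs with
  | nil => simpa using (Bundle.nil : Bundle u 0 0 0)
  | cons p prs ih =>
      simp only [List.map_cons, List.sum_cons]
      have : Multiset.ofList (p.2.1 :: prs.map (·.2.1))
          = p.2.1 ::ₘ Multiset.ofList (prs.map (·.2.1)) := rfl
      rw [this]
      exact Bundle.cons (h p List.mem_cons_self)
        (ih (fun q hq => h q (List.mem_cons_of_mem p hq)))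

theorem Bundle.ofBg {u : Tm} {Δ : Ctx} {l : List Ty} {S : ℕ}
    (h : DerU Δ (Tm.bang u) (Ty.mult l) S) : Bundle u (Multiset.ofList l) Δ S := by
  cases h with
  | bg prs hprs => exact Bundle.ofList prs hprs

theorem DerU.bangCons {Γ Δ : Ctx} {u : Tm} {τ : Ty} {l : List Ty} {n S : ℕ}
    (d : DerU Γ u τ n) (h : DerU Δ (Tm.bang u) (Ty.mult l) S) :
    DerU (Γ + Δ) (Tm.bang u) (Ty.mult (τ :: l)) (n + S) := by
  cases h with
  | bg prs hprs =>
      have := DerU.bg ((Γ, τ, n) :: prs)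
        (fun p hp => by
          rcases List.mem_cons.mp hp with rfl | hp
          · exact d
          · exact hprs p hp)
      simpa using this

theorem Bundle.toBg {u : Tm} {M : Multiset Ty} {Δ : Ctx} {S : ℕ} (h : Bundle u M Δ S) :
    ∃ l : List Ty, Multiset.ofList l = M ∧ DerU Δ (Tm.bang u) (Ty.mult l) S := by
  induction h with
  | nil =>
      refine ⟨[], rfl, ?_⟩
      have := DerU.bg (t := u) [] (by simp)
      simpa using this
  | cons d hb ih =>
      obtain ⟨l, rfl, hbg⟩ := ih
      exact ⟨_ :: l, by simp, DerU.bangCons d hbg⟩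


open Tm

namespace Ctx

/-- the context of `subst (sVar j n u) t` as a function of that of `t` -/
def insAt (j n : ℕ) (Γ : Ctx) : Ctx := fun i =>
  if i < j then Γ i else if j + n ≤ i then Γ (i + 1 - n) else 0

theorem insAt_add (j n : ℕ) (Γ Δ : Ctx) :
    insAt j n (Γ + Δ) = insAt j n Γ + insAt j n Δ := by
  funext i
  simp only [insAt, Pi.add_apply]
  split
  · rfl
  · split
    · rfl
    · simp

theorem insAt_zero (j n : ℕ) : insAt j n (0 : Ctx) = 0 := by
  funext i
  simp only [insAt, Pi.zero_apply]
  split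
  · rfl
  · split <;> rfl

theorem insAt_single_self (j n : ℕ) (M : Multiset Ty) :
    insAt j n (single j M) = 0 := by
  funext i
  simp only [insAt, single, Pi.zero_apply]
  split
  · rw [if_neg (by omega)]
  · split
    · rw [if_neg (by omega)]
    · rfl

theorem insAt_single_lt {k j : ℕ} (n : ℕ) (h : k < j) (M : Multiset Ty) :
    insAt j n (single k M) = single k M := by
  funext i
  simp only [insAt, single]
  split
  · rfl
  · split
    · rw [if_neg (by omega), if_neg (by omega)]
    · rw [if_neg (by omega)]

theorem insAt_single_gt {k j : ℕ} (n : ℕ) (h : j < k) (M : Multiset Ty) :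
    insAt j n (single k M) = single (k - 1 + n) M := by
  funext i
  simp only [insAt, single]
  split
  · rw [if_neg (by omega), if_neg (by omega)]
  · split
    · by_cases hik : i + 1 - n = k
      · rw [if_pos hik, if_pos (by omega)]
      · rw [if_neg hik, if_neg (by omega)]
    · rw [if_neg (by omega)]

theorem tail_insAt (j n : ℕ) (Γ : Ctx) :
    tail (insAt (j + 1) n Γ) = insAt j n (tail Γ) := by
  funext i
  show insAt (j + 1) n Γ (i + 1) = insAt j n (tail Γ) i
  simp only [insAt, tail]
  by_cases h1 : i < j
  · rw [if_pos (by omega), if_pos h1]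
  · rw [if_neg (by omega), if_neg h1]
    by_cases h2 : j + n ≤ i
    · rw [if_pos (by omega), if_pos h2]
      congr 1
      omega
    · rw [if_neg (by omega), if_neg h2]

theorem insAt_apply_zero (j n : ℕ) (Γ : Ctx) : insAt (j + 1) n Γ 0 = Γ 0 := by
  simp only [insAt]
  rw [if_pos (by omega)]

theorem insAt_zero_eq_ren (n : ℕ) (Γ : Ctx) :
    insAt 0 n Γ = ren (· + n) (tail Γ) := by
  funext i
  by_cases h : n ≤ i
  · obtain ⟨d, rfl⟩ : ∃ d, i = d + n := ⟨i - n, by omega⟩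
    have e : ren (· + n) (tail Γ) (d + n) = tail Γ d :=
      ren_apply (addR_injective n) (tail Γ) d
    rw [e]
    simp only [insAt]
    rw [if_neg (by omega), if_pos (by omega)]
    show Γ (d + n + 1 - n) = Γ (d + 1)
    congr 1
    omega
  · rw [ren_not_range (fun l hl => by omega) Γ.tail]
    simp only [insAt]
    rw [if_neg (by omega), if_neg (by omega)]

theorem insAt_sum (j n : ℕ) (l : List Ctx) :
    insAt j n l.sum = (l.map (insAt j n)).sum := by
  induction l with
  | nil => simp [insAt_zero]
  | cons a l ih => simp [List.sum_cons, insAt_add, ih]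

theorem ren_add_zero (Δ : Ctx) : ren (· + 0) Δ = Δ := ren_id (fun k => rfl) Δ

end Ctx


open Tm

/-- weighted substitution lemma -/
theorem DerU.substLemma {Γ : Ctx} {t : Tm} {σ : Ty} {m : ℕ} (h : DerU Γ t σ m) :
    ∀ (j n : ℕ) (u : Tm) (Δ : Ctx) (S : ℕ), Bundle u (Γ j) Δ S →
    ∃ m', DerU (Ctx.insAt j n Γ + Ctx.ren (· + j) Δ) (subst (sVar j n u) t) σ m' ∧
      m' + Multiset.card (Γ j) = m + S := by
  induction h with
  | ax k σ =>
      intro j n u Δ S hb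
      rcases lt_trichotomy k j with hkj | rfl | hkj
      · have h0 : Ctx.single k {σ} j = 0 := by simp [Ctx.single]; omega
        rw [h0] at hb
        obtain ⟨rfl, rfl⟩ := hb.zero_inv
        refine ⟨1, ?_, by rw [h0]; simp⟩
        rw [Ctx.ren_zero, add_zero, Ctx.insAt_single_lt n hkj]
        have : subst (sVar j n u) (.var k) = .var k := by
          simp only [subst]; exact sVar_lt n u hkj
        rw [this]
        exact DerU.ax k σ
      · have h0 : Ctx.single k {σ} k = {σ} := by simp [Ctx.single]
        rw [h0] at hb
        obtain ⟨Γ₀, n₀, Δ', S', d, hb', rfl, rfl⟩ := hb.extract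
        obtain ⟨rfl, rfl⟩ := hb'.zero_inv
        refine ⟨n₀, ?_, by rw [h0, Multiset.card_singleton]; omega⟩
        rw [Ctx.insAt_single_self, zero_add, Ctx.ren_add, Ctx.ren_zero, add_zero]
        have : subst (sVar k n u) (.var k) = rename (· + k) u := by
          simp only [subst]; exact sVar_self k n u
        rw [this]
        exact d.ren (addR_injective k)
      · have h0 : Ctx.single k {σ} j = 0 := by simp [Ctx.single]; omega
        rw [h0] at hb
        obtain ⟨rfl, rfl⟩ := hb.zero_inv
        refine ⟨1, ?_, by rw [h0]; simp⟩
        rw [Ctx.ren_zero, add_zero, Ctx.insAt_single_gt n hkj]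
        have : subst (sVar j n u) (.var k) = .var (k - 1 + n) := by
          simp only [subst]; exact sVar_gt n u hkj
        rw [this]
        exact DerU.ax (k - 1 + n) σ
  | @app Γ₁ Γ₂ t₁ t₂ M τ m₁ m₂ h1 h2 ih1 ih2 =>
      intro j n u Δ S hb
      rw [Pi.add_apply] at hb
      obtain ⟨Δ₁, S₁, Δ₂, S₂, hb1, hb2, rfl, rfl⟩ := hb.split
      obtain ⟨m₁', d₁, e₁⟩ := ih1 j n u Δ₁ S₁ hb1
      obtain ⟨m₂', d₂, e₂⟩ := ih2 j n u Δ₂ S₂ hb2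
      refine ⟨m₁' + m₂' + 1, ?_, ?_⟩
      · rw [Ctx.insAt_add, Ctx.ren_add, add_add_add_comm]
        exact DerU.app d₁ d₂
      · have := Multiset.card_add (Γ₁ j) (Γ₂ j)
        rw [Pi.add_apply, this]
        omega
  | @abs Γ₁ t₁ τ m₁ M h1 hM ih =>
      intro j n u Δ S hb
      obtain ⟨m', d, e⟩ := ih (j + 1) n u Δ S hb
      refine ⟨m' + 1, ?_, (by omega : m' + 1 + Multiset.card (Γ₁ (j + 1)) = m₁ + 1 + S)⟩
      have ht : subst (sVar j n u) (.lam t₁) = .lam (subst (sVar (j + 1) n u) t₁) := by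
        simp only [subst]
        rw [subst_ext (liftS_sVar j n u) t₁]
      rw [ht]
      have habs := DerU.abs M d (by
        rw [hM, Pi.add_apply, Ctx.insAt_apply_zero, Ctx.ren_succ_zero, add_zero])
      rw [Ctx.tail_add, Ctx.tail_insAt, Ctx.tail_ren_succ] at habs
      exact habs
  | @es Γ₁ Δ₂ t₁ u₂ σ₁ M m₁ m₂ h1 h2 hM ih1 ih2 =>
      intro j n u Δ S hb
      rw [Pi.add_apply] at hb
      obtain ⟨Δa, Sa, Δb, Sb, hba, hbb, rfl, rfl⟩ := hb.split
      obtain ⟨ma', da, ea⟩ := ih1 (j + 1) n u Δa Sa hba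
      obtain ⟨mb', db, eb⟩ := ih2 j n u Δb Sb hbb
      refine ⟨ma' + mb' + 1, ?_, ?_⟩
      · have ht : subst (sVar j n u) (.esub t₁ u₂)
            = .esub (subst (sVar (j + 1) n u) t₁) (subst (sVar j n u) u₂) := by
          simp only [subst]
          rw [subst_ext (liftS_sVar j n u) t₁]
        rw [ht]
        have hes := DerU.es da db (by
          rw [hM, Pi.add_apply, Ctx.insAt_apply_zero, Ctx.ren_succ_zero, add_zero])
        rw [Ctx.tail_add, Ctx.tail_insAt, Ctx.tail_ren_succ] at hes
        have : Ctx.insAt j n Γ₁.tail + Ctx.ren (· + j) Δa + (Ctx.insAt j n Δ₂ + Ctx.ren (· + j) Δb)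
            = Ctx.insAt j n (Γ₁.tail + Δ₂) + Ctx.ren (· + j) (Δa + Δb) := by
          rw [Ctx.insAt_add, Ctx.ren_add, add_add_add_comm]
        rw [← this]
        exact hes
      · have ea' : ma' + Multiset.card (Γ₁.tail j) = m₁ + Sa := ea
        rw [Pi.add_apply, Multiset.card_add]
        omega
  | @bg t₁ prs hmem ih =>
      intro j n u Δ S hb
      have key : ∀ (l : List (Ctx × Ty × ℕ)),
          (∀ p ∈ l, ∀ (j n : ℕ) (u : Tm) (Δ : Ctx) (S : ℕ), Bundle u (p.1 j) Δ S →
            ∃ m', DerU (Ctx.insAt j n p.1 + Ctx.ren (· + j) Δ)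
                (subst (sVar j n u) t₁) p.2.1 m' ∧
              m' + Multiset.card (p.1 j) = p.2.2 + S) →
          ∀ (Δ : Ctx) (S : ℕ), Bundle u (((l.map (·.1)).sum : Ctx) j) Δ S →
          ∃ prs' : List (Ctx × Ty × ℕ),
            (∀ q ∈ prs', DerU q.1 (subst (sVar j n u) t₁) q.2.1 q.2.2) ∧
            prs'.map (·.2.1) = l.map (·.2.1) ∧
            (prs'.map (·.1)).sum
              = Ctx.insAt j n ((l.map (·.1)).sum) + Ctx.ren (· + j) Δ ∧
            (prs'.map (·.2.2)).sum + Multiset.card (((l.map (·.1)).sum : Ctx) j)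
              = (l.map (·.2.2)).sum + S := by
        intro l
        induction l with
        | nil =>
            intro _ Δ S hb
            rw [show ((([] : List (Ctx × Ty × ℕ)).map (·.1)).sum : Ctx) j = 0 by simp] at hb ⊢
            obtain ⟨rfl, rfl⟩ := hb.zero_inv
            exact ⟨[], by simp, by simp, by
              simp [Ctx.insAt_zero, Ctx.ren_zero], by simp⟩
        | cons p l ihl =>
            intro hl Δ S hb
            rw [List.map_cons, List.sum_cons, Pi.add_apply] at hb
            obtain ⟨Δ₁, S₁, Δ₂, S₂, hb1, hb2, rfl, rfl⟩ := hb.split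
            obtain ⟨m', d, e⟩ := hl p List.mem_cons_self j n u Δ₁ S₁ hb1
            obtain ⟨prs', hd', ht', hc', hs'⟩ :=
              ihl (fun q hq => hl q (List.mem_cons_of_mem p hq)) Δ₂ S₂ hb2
            refine ⟨(Ctx.insAt j n p.1 + Ctx.ren (· + j) Δ₁, p.2.1, m') :: prs',
              ?_, ?_, ?_, ?_⟩
            · intro q hq
              rcases List.mem_cons.mp hq with rfl | hq
              · exact d
              · exact hd' q hq
            · rw [List.map_cons, List.map_cons, ht']
            · simp only [List.map_cons, List.sum_cons, hc']
              rw [Ctx.insAt_add, Ctx.ren_add, add_add_add_comm]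
            · simp only [List.map_cons, List.sum_cons]
              have hsum : ((p.1 + (List.map (fun x => x.1) l).sum : Ctx)) j
                  = p.1 j + (List.map (fun x => x.1) l).sum j := rfl
              rw [hsum, Multiset.card_add]
              omega
      obtain ⟨prs', hd', ht', hc', hs'⟩ := key prs ih Δ S hb
      refine ⟨(prs'.map (·.2.2)).sum, ?_, by rw [hs']⟩
      have := DerU.bg prs' hd'
      rw [ht', hc'] at this
      exact this
  | dr h ih =>
      intro j n u Δ S hb
      obtain ⟨m', d, e⟩ := ih j n u Δ S hb
      exact ⟨m' + 1, DerU.dr d, by omega⟩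


open Tm

/-- anti-substitution lemma -/
theorem subst_inv : ∀ (t : Tm) (j n : ℕ) (u : Tm) {Γ' : Ctx} {σ : Ty} {m' : ℕ},
    DerU Γ' (subst (sVar j n u) t) σ m' →
    ∃ Γ Δ m S, DerU Γ t σ m ∧ Bundle u (Γ j) Δ S ∧
      Γ' = Ctx.insAt j n Γ + Ctx.ren (· + j) Δ ∧
      m' + Multiset.card (Γ j) = m + S := by
  intro t
  induction t with
  | var k =>
      intro j n u Γ' σ m' h
      rcases lt_trichotomy k j with hkj | rfl | hkj
      · rw [show subst (sVar j n u) (.var k) = .var k by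
          simp only [subst]; exact sVar_lt n u hkj] at h
        cases h
        refine ⟨Ctx.single k {σ}, 0, 1, 0, DerU.ax k σ, ?_, ?_, ?_⟩
        · rw [show Ctx.single k {σ} j = 0 by simp [Ctx.single]; omega]
          exact Bundle.nil
        · rw [Ctx.insAt_single_lt n hkj, Ctx.ren_zero, add_zero]
        · rw [show Ctx.single k {σ} j = 0 by simp [Ctx.single]; omega]
          simp
      · rw [show subst (sVar k n u) (.var k) = rename (· + k) u by
          simp only [subst]; exact sVar_self k n u] at h
        obtain ⟨Δ₀, rfl, d⟩ := derU_rename_inv u (addR_injective k) h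
        refine ⟨Ctx.single k {σ}, Δ₀, 1, m', DerU.ax k σ, ?_, ?_, ?_⟩
        · rw [show Ctx.single k {σ} k = {σ} by simp [Ctx.single]]
          have := Bundle.cons d (Bundle.nil (u := u))
          simpa using this
        · rw [Ctx.insAt_single_self, zero_add]
        · rw [show Ctx.single k {σ} k = {σ} by simp [Ctx.single]]
          simp
          omega
      · rw [show subst (sVar j n u) (.var k) = .var (k - 1 + n) by
          simp only [subst]; exact sVar_gt n u hkj] at h
        cases h
        refine ⟨Ctx.single k {σ}, 0, 1, 0, DerU.ax k σ, ?_, ?_, ?_⟩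
        · rw [show Ctx.single k {σ} j = 0 by simp [Ctx.single]; omega]
          exact Bundle.nil
        · rw [Ctx.insAt_single_gt n hkj, Ctx.ren_zero, add_zero]
        · rw [show Ctx.single k {σ} j = 0 by simp [Ctx.single]; omega]
          simp
  | app t₁ t₂ ih1 ih2 =>
      intro j n u Γ' σ m' h
      rw [show subst (sVar j n u) (.app t₁ t₂)
          = .app (subst (sVar j n u) t₁) (subst (sVar j n u) t₂) from rfl] at h
      cases h with
      | app h1 h2 =>
          obtain ⟨Γ₁, Δ₁, m₁, S₁, d1, b1, rfl, e1⟩ := ih1 j n u h1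
          obtain ⟨Γ₂, Δ₂, m₂, S₂, d2, b2, rfl, e2⟩ := ih2 j n u h2
          refine ⟨Γ₁ + Γ₂, Δ₁ + Δ₂, m₁ + m₂ + 1, S₁ + S₂, DerU.app d1 d2, ?_, ?_, ?_⟩
          · rw [Pi.add_apply]
            exact b1.append b2
          · rw [Ctx.insAt_add, Ctx.ren_add, add_add_add_comm]
          · rw [Pi.add_apply, Multiset.card_add]
            omega
  | lam t ih =>
      intro j n u Γ' σ m' h
      rw [show subst (sVar j n u) (.lam t) = .lam (subst (liftS (sVar j n u)) t) from rfl,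
        subst_ext (liftS_sVar j n u) t] at h
      cases h with
      | abs M h1 hM =>
          obtain ⟨Γ, Δ, m, S, d, b, rfl, e⟩ := ih (j + 1) n u h1
          refine ⟨Ctx.tail Γ, Δ, m + 1, S, ?_, b, ?_, ?_⟩
          · exact DerU.abs M d (by
              rw [hM, Pi.add_apply, Ctx.insAt_apply_zero, Ctx.ren_succ_zero, add_zero])
          · rw [Ctx.tail_add, Ctx.tail_insAt, Ctx.tail_ren_succ]
          · have e' : _ + Multiset.card (Γ.tail j) = m + S := e
            omega
  | bang t ih =>
      intro j n u Γ' σ m' h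
      rw [show subst (sVar j n u) (.bang t) = .bang (subst (sVar j n u) t) from rfl] at h
      cases h with
      | bg prs hprs =>
          have key : ∀ l : List (Ctx × Ty × ℕ),
              (∀ p ∈ l, DerU p.1 (subst (sVar j n u) t) p.2.1 p.2.2) →
              ∃ (prs' : List (Ctx × Ty × ℕ)) (Δ : Ctx) (S : ℕ),
                (∀ q ∈ prs', DerU q.1 t q.2.1 q.2.2) ∧
                prs'.map (·.2.1) = l.map (·.2.1) ∧
                Bundle u ((((prs'.map (·.1)).sum : Ctx)) j) Δ S ∧
                (l.map (·.1)).sum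
                  = Ctx.insAt j n ((prs'.map (·.1)).sum) + Ctx.ren (· + j) Δ ∧
                (l.map (·.2.2)).sum + Multiset.card ((((prs'.map (·.1)).sum : Ctx)) j)
                  = (prs'.map (·.2.2)).sum + S := by
            intro l
            induction l with
            | nil =>
                intro _
                refine ⟨[], 0, 0, by simp, rfl, ?_, ?_, ?_⟩
                · rw [show ((([] : List (Ctx × Ty × ℕ)).map (·.1)).sum : Ctx) j = 0 by simp]
                  exact Bundle.nil
                · simp [Ctx.insAt_zero, Ctx.ren_zero]
                · simp
            | cons p l ihl =>
                intro hl
                obtain ⟨prs', Δ₂, S₂, hd', ht', hb', hc', hs'⟩ :=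
                  ihl (fun q hq => hl q (List.mem_cons_of_mem p hq))
                obtain ⟨Γp, Δ₁, mp, S₁, dp, bp, hcp, ep⟩ :=
                  ih j n u (hl p List.mem_cons_self)
                refine ⟨(Γp, p.2.1, mp) :: prs', Δ₁ + Δ₂, S₁ + S₂, ?_, ?_, ?_, ?_, ?_⟩
                · intro q hq
                  rcases List.mem_cons.mp hq with rfl | hq
                  · exact dp
                  · exact hd' q hq
                · rw [List.map_cons, List.map_cons, ht']
                · simp only [List.map_cons, List.sum_cons]
                  have hsum : ((Γp + (List.map (fun x => x.1) prs').sum : Ctx)) j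
                      = Γp j + (List.map (fun x => x.1) prs').sum j := rfl
                  rw [hsum]
                  exact bp.append hb'
                · simp only [List.map_cons, List.sum_cons, hcp, hc']
                  rw [Ctx.insAt_add, Ctx.ren_add, add_add_add_comm]
                · simp only [List.map_cons, List.sum_cons]
                  have hsum : ((Γp + (List.map (fun x => x.1) prs').sum : Ctx)) j
                      = Γp j + (List.map (fun x => x.1) prs').sum j := rfl
                  rw [hsum, Multiset.card_add]
                  omega
          obtain ⟨prs', Δ, S, hd', ht', hb', hc', hs'⟩ := key prs hprs
          refine ⟨(prs'.map (·.1)).sum, Δ, (prs'.map (·.2.2)).sum, S, ?_, hb', hc', hs'⟩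
          have := DerU.bg prs' hd'
          rw [ht'] at this
          exact this
  | der t ih =>
      intro j n u Γ' σ m' h
      rw [show subst (sVar j n u) (.der t) = .der (subst (sVar j n u) t) from rfl] at h
      cases h with
      | dr h1 =>
          obtain ⟨Γ, Δ, m, S, d, b, rfl, e⟩ := ih j n u h1
          exact ⟨Γ, Δ, m + 1, S, DerU.dr d, b, rfl, by omega⟩
  | esub t₁ t₂ ih1 ih2 =>
      intro j n u Γ' σ m' h
      rw [show subst (sVar j n u) (.esub t₁ t₂)
          = .esub (subst (liftS (sVar j n u)) t₁) (subst (sVar j n u) t₂) from rfl,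
        subst_ext (liftS_sVar j n u) t₁] at h
      cases h with
      | es h1 h2 hM =>
          obtain ⟨Γ₁, Δ₁, m₁, S₁, d1, b1, rfl, e1⟩ := ih1 (j + 1) n u h1
          obtain ⟨Γ₂, Δ₂, m₂, S₂, d2, b2, rfl, e2⟩ := ih2 j n u h2
          refine ⟨Ctx.tail Γ₁ + Γ₂, Δ₁ + Δ₂, m₁ + m₂ + 1, S₁ + S₂, ?_, ?_, ?_, ?_⟩
          · exact DerU.es d1 d2 (by
              rw [hM, Pi.add_apply, Ctx.insAt_apply_zero, Ctx.ren_succ_zero, add_zero])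
          · rw [Pi.add_apply]
            exact b1.append b2
          · rw [Ctx.tail_add, Ctx.tail_insAt, Ctx.tail_ren_succ, Ctx.insAt_add,
              Ctx.ren_add, add_add_add_comm]
          · rw [Pi.add_apply, Multiset.card_add]
            have e1' : _ + Multiset.card (Γ₁.tail j) = m₁ + S₁ := e1
            omega


open Tm

theorem DerU.size_eq {Γ : Ctx} {t : Tm} {σ : Ty} {n n' : ℕ}
    (h : DerU Γ t σ n) (e : n = n') : DerU Γ t σ n' := e ▸ h

theorem DerU.ctx_eq {Γ Γ' : Ctx} {t : Tm} {σ : Ty} {n : ℕ}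
    (h : DerU Γ t σ n) (e : Γ = Γ') : DerU Γ' t σ n := e ▸ h

theorem Ctx.tail_ren_one (Γ : Ctx) : Ctx.tail (Ctx.ren (· + 1) Γ) = Γ := by
  funext k
  exact Ctx.ren_apply (addR_injective 1) Γ k

theorem Ctx.ren_one_zero (Γ : Ctx) : Ctx.ren (· + 1) Γ 0 = 0 :=
  Ctx.ren_not_range (fun j => by omega) Γ

/-- typing decomposition of a list context -/
inductive ESFrame : List Tm → Ctx → Ctx → ℕ → Prop
  | nil (Γ : Ctx) : ESFrame [] Γ Γ 0
  | cons {L : List Tm} {Γs Γ Δ : Ctx} {e : Tm} {M : List Ty} {k me : ℕ} :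
      ESFrame L Γs Γ k → DerU Δ e (Ty.mult M) me → Multiset.ofList M = Γ 0 →
      ESFrame (e :: L) Γs (Ctx.tail Γ + Δ) (k + me + 1)

theorem plug_gen : ∀ (L : List Tm) {s : Tm} {Γ' : Ctx} {σ : Ty} {m : ℕ},
    DerU Γ' (plug L s) σ m →
    ∃ Γs k ms, ESFrame L Γs Γ' k ∧ DerU Γs s σ ms ∧ m = ms + k := by
  intro L
  induction L with
  | nil => exact fun h => ⟨_, 0, _, ESFrame.nil _, h, rfl⟩
  | cons e L ih =>
      intro s Γ' σ m h
      rw [show plug (e :: L) s = .esub (plug L s) e from rfl] at h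
      cases h with
      | es h1 h2 hM =>
          obtain ⟨Γs, k, ms, hf, hs, rfl⟩ := ih h1
          exact ⟨Γs, k + _ + 1, ms, ESFrame.cons hf h2 hM, hs, by omega⟩

theorem plug_intro : ∀ {L : List Tm} {Γs Γ' : Ctx} {k : ℕ},
    ESFrame L Γs Γ' k → ∀ {s σ ms}, DerU Γs s σ ms → DerU Γ' (plug L s) σ (ms + k) := by
  intro L Γs Γ' k hf
  induction hf with
  | nil => exact fun h => h.size_eq (by omega)
  | cons hf h2 hM ih =>
      intro s σ ms h
      exact (DerU.es (ih h) h2 hM).size_eq (by omega)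

theorem ESFrame.weaken : ∀ {L : List Tm} {Γs Γ' : Ctx} {k : ℕ},
    ESFrame L Γs Γ' k → ∀ C : Ctx,
    ESFrame L (Γs + Ctx.ren (· + L.length) C) (Γ' + C) k := by
  intro L Γs Γ' k hf
  induction hf with
  | nil =>
      intro C
      rw [show ([] : List Tm).length = 0 from rfl, Ctx.ren_add_zero]
      exact ESFrame.nil _
  | @cons L Γs Γ Δ e M k me hf h2 hM ih =>
      intro C
      have hcomp : Ctx.ren (· + L.length) (Ctx.ren (· + 1) C)
          = Ctx.ren (· + (e :: L).length) C := by
        rw [Ctx.ren_comp (addR_injective _) (addR_injective _)]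
        exact Ctx.ren_congr (fun x => by show x + 1 + L.length = x + (L.length + 1); omega) C
      have := ESFrame.cons (hcomp ▸ ih (Ctx.ren (· + 1) C)) h2
        (by rw [hM, Pi.add_apply, Ctx.ren_one_zero, add_zero])
      rw [Ctx.tail_add, Ctx.tail_ren_one] at this
      rw [add_right_comm]
      exact this

theorem ESFrame.strengthen : ∀ {L : List Tm} {A Γ' : Ctx} {k : ℕ},
    ESFrame L A Γ' k → ∀ (Γs C : Ctx), A = Γs + Ctx.ren (· + L.length) C →
    ∃ Γ'', ESFrame L Γs Γ'' k ∧ Γ' = Γ'' + C := by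
  intro L A Γ' k hf
  induction hf with
  | nil =>
      intro Γs C hA
      refine ⟨Γs, ESFrame.nil _, ?_⟩
      rw [hA]
      simp only [List.length_nil]
      rw [Ctx.ren_add_zero]
  | @cons L Γs₀ Γ Δ e M k me hf h2 hM ih =>
      intro Γs C hA
      have hcomp : Ctx.ren (· + L.length) (Ctx.ren (· + 1) C)
          = Ctx.ren (· + (e :: L).length) C := by
        rw [Ctx.ren_comp (addR_injective _) (addR_injective _)]
        exact Ctx.ren_congr (fun x => by show x + 1 + L.length = x + (L.length + 1); omega) C
      obtain ⟨Γ₀, hf₀, rfl⟩ := ih Γs (Ctx.ren (· + 1) C) (by rw [hA, hcomp])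
      refine ⟨Ctx.tail Γ₀ + Δ, ESFrame.cons hf₀ h2 ?_, ?_⟩
      · rw [hM, Pi.add_apply, Ctx.ren_one_zero, add_zero]
      · rw [Ctx.tail_add, Ctx.tail_ren_one, add_right_comm]

/-! ### Root subject reduction -/

theorem SR_dB {L : List Tm} {t u : Tm} {Γ' : Ctx} {σ : Ty} {m : ℕ}
    (h : DerU Γ' (.app (plug L (.lam t)) u) σ m) :
    ∃ m', DerU Γ' (plug L (.esub t (rename (· + L.length) u))) σ m' ∧ m' + 1 ≤ m := by
  cases h with
  | app h1 h2 =>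
      obtain ⟨Γs, k, ms, hf, hs, rfl⟩ := plug_gen L h1
      cases hs with
      | abs M hd hM =>
          have inner := DerU.es hd (h2.ren (addR_injective L.length)) hM
          have := plug_intro (hf.weaken _) inner
          exact ⟨_, this, by omega⟩

theorem SR_sb {L : List Tm} {t u : Tm} {Γ' : Ctx} {σ : Ty} {m : ℕ}
    (h : DerU Γ' (.esub t (plug L (.bang u))) σ m) :
    ∃ m', DerU Γ' (plug L (substIn L.length u t)) σ m' ∧ m' + 1 ≤ m := by
  cases h with
  | es dt dB hM =>
      obtain ⟨Γs, k, ms, hf, ds, rfl⟩ := plug_gen L dB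
      have bdl := Bundle.ofBg ds
      rw [hM] at bdl
      obtain ⟨m', d', e'⟩ := dt.substLemma 0 L.length u Γs ms bdl
      rw [Ctx.insAt_zero_eq_ren, Ctx.ren_add_zero, subst_sVar_zero] at d'
      have d'' := d'.ctx_eq (add_comm _ _)
      have dout := plug_intro (hf.weaken _) d''
      refine ⟨m' + k, dout.ctx_eq (add_comm _ _), ?_⟩
      omega

theorem SR_db {L : List Tm} {t : Tm} {Γ' : Ctx} {σ : Ty} {m : ℕ}
    (h : DerU Γ' (.der (plug L (.bang t))) σ m) :
    ∃ m', DerU Γ' (plug L t) σ m' ∧ m' + 1 ≤ m := by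
  cases h with
  | dr hd =>
      obtain ⟨Γs, k, ms, hf, ds, rfl⟩ := plug_gen L hd
      have bdl := Bundle.ofBg ds
      rw [show (Multiset.ofList [σ]) = σ ::ₘ 0 from rfl] at bdl
      obtain ⟨Γp, np, Δ', S', dp, hb', rfl, rfl⟩ := bdl.extract
      obtain ⟨rfl, rfl⟩ := hb'.zero_inv
      have dp' : DerU (Γp + 0) t σ np := dp.ctx_eq (add_zero Γp).symm
      exact ⟨np + k, plug_intro hf dp', by omega⟩

/-! ### Root subject expansion -/

theorem SE_dB {L : List Tm} {t u : Tm} {Γ' : Ctx} {σ : Ty} {m' : ℕ}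
    (h : DerU Γ' (plug L (.esub t (rename (· + L.length) u))) σ m') :
    ∃ m, DerU Γ' (.app (plug L (.lam t)) u) σ m := by
  obtain ⟨A, k, ms, hf, hs, rfl⟩ := plug_gen L h
  cases hs with
  | es dt du' hM =>
      obtain ⟨Γb, rfl, du⟩ := derU_rename_inv u (addR_injective L.length) du'
      obtain ⟨Γ'', hf₀, rfl⟩ := hf.strengthen (Ctx.tail _) Γb rfl
      exact ⟨_, DerU.app (plug_intro hf₀ (DerU.abs _ dt hM)) du⟩

theorem SE_sb {L : List Tm} {t u : Tm} {Γ' : Ctx} {σ : Ty} {m' : ℕ}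
    (h : DerU Γ' (plug L (substIn L.length u t)) σ m') :
    ∃ m, DerU Γ' (.esub t (plug L (.bang u))) σ m := by
  obtain ⟨A, k, ms, hf, hs, rfl⟩ := plug_gen L h
  rw [← subst_sVar_zero] at hs
  obtain ⟨Γt, Δ, mt, S, dt, bdl, hA, e⟩ := subst_inv t 0 L.length u hs
  obtain ⟨l, hl, dbg⟩ := bdl.toBg
  have hA' : A = Δ + Ctx.ren (· + L.length) (Ctx.tail Γt) := by
    rw [hA, Ctx.insAt_zero_eq_ren, Ctx.ren_add_zero, add_comm]
  obtain ⟨Γ'', hf₀, rfl⟩ := hf.strengthen Δ (Ctx.tail Γt) hA'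
  have dplug := plug_intro hf₀ dbg
  exact ⟨_, (DerU.es dt dplug (by rw [hl])).ctx_eq (add_comm _ _)⟩

theorem SE_db {L : List Tm} {t : Tm} {Γ' : Ctx} {σ : Ty} {m' : ℕ}
    (h : DerU Γ' (plug L t) σ m') :
    ∃ m, DerU Γ' (.der (plug L (.bang t))) σ m := by
  obtain ⟨A, k, ms, hf, hs, rfl⟩ := plug_gen L h
  have hbg : DerU A (.bang t) (Ty.mult [σ]) ms := by
    have := DerU.bg [(A, σ, ms)] (by
      intro p hp
      rcases List.mem_cons.mp hp with rfl | hp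
      · exact hs
      · exact absurd hp List.not_mem_nil)
    simpa using this
  exact ⟨_, DerU.dr (plug_intro hf hbg)⟩

/-! ### Subject reduction and expansion for steps -/

theorem stepSR {r : Rule} {t t' : Tm} (hs : Step r t t') :
    ∀ {Γ : Ctx} {σ : Ty} {n : ℕ}, DerU Γ t σ n → ∃ n', DerU Γ t' σ n' ∧ n' + 1 ≤ n := by
  induction hs with
  | root hr =>
      intro Γ σ n h
      cases hr with
      | dB L t u => exact SR_dB h
      | sb L t u => exact SR_sb h
      | db L t => exact SR_db h
  | appL u _ ih =>
      intro Γ σ n h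
      cases h with
      | app h1 h2 =>
          obtain ⟨n', d, e⟩ := ih h1
          exact ⟨_, DerU.app d h2, by omega⟩
  | appR t _ ih =>
      intro Γ σ n h
      cases h with
      | app h1 h2 =>
          obtain ⟨n', d, e⟩ := ih h2
          exact ⟨_, DerU.app h1 d, by omega⟩
  | lam _ ih =>
      intro Γ σ n h
      cases h with
      | abs M h1 hM =>
          obtain ⟨n', d, e⟩ := ih h1
          exact ⟨_, DerU.abs M d hM, by omega⟩
  | der _ ih =>
      intro Γ σ n h
      cases h with
      | dr h1 =>
          obtain ⟨n', d, e⟩ := ih h1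
          exact ⟨_, DerU.dr d, by omega⟩
  | esubL u _ ih =>
      intro Γ σ n h
      cases h with
      | es h1 h2 hM =>
          obtain ⟨n', d, e⟩ := ih h1
          exact ⟨_, DerU.es d h2 hM, by omega⟩
  | esubR t _ ih =>
      intro Γ σ n h
      cases h with
      | es h1 h2 hM =>
          obtain ⟨n', d, e⟩ := ih h2
          exact ⟨_, DerU.es h1 d hM, by omega⟩

theorem stepSE {r : Rule} {t t' : Tm} (hs : Step r t t') :
    ∀ {Γ : Ctx} {σ : Ty} {n' : ℕ}, DerU Γ t' σ n' → ∃ n, DerU Γ t σ n := by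
  induction hs with
  | root hr =>
      intro Γ σ n h
      cases hr with
      | dB L t u => exact SE_dB h
      | sb L t u => exact SE_sb h
      | db L t => exact SE_db h
  | appL u _ ih =>
      intro Γ σ n h
      cases h with
      | app h1 h2 =>
          obtain ⟨n', d⟩ := ih h1
          exact ⟨_, DerU.app d h2⟩
  | appR t _ ih =>
      intro Γ σ n h
      cases h with
      | app h1 h2 =>
          obtain ⟨n', d⟩ := ih h2
          exact ⟨_, DerU.app h1 d⟩
  | lam _ ih =>
      intro Γ σ n h
      cases h with
      | abs M h1 hM =>
          obtain ⟨n', d⟩ := ih h1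
          exact ⟨_, DerU.abs M d hM⟩
  | der _ ih =>
      intro Γ σ n h
      cases h with
      | dr h1 =>
          obtain ⟨n', d⟩ := ih h1
          exact ⟨_, DerU.dr d⟩
  | esubL u _ ih =>
      intro Γ σ n h
      cases h with
      | es h1 h2 hM =>
          obtain ⟨n', d⟩ := ih h1
          exact ⟨_, DerU.es d h2 hM⟩
  | esubR t _ ih =>
      intro Γ σ n h
      cases h with
      | es h1 h2 hM =>
          obtain ⟨n', d⟩ := ih h2
          exact ⟨_, DerU.es h1 d hM⟩


open Tm

theorem wsize_le {Γ : Ctx} {t : Tm} {σ : Ty} {n : ℕ} (h : DerU Γ t σ n) :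
    Tm.wsize t ≤ n := by
  induction h with
  | ax k σ => simp [Tm.wsize]
  | app h1 h2 ih1 ih2 => simp only [Tm.wsize]; omega
  | abs M h hM ih => simp only [Tm.wsize]; omega
  | es h1 h2 hM ih1 ih2 => simp only [Tm.wsize]; omega
  | bg prs h ih => simp [Tm.wsize]
  | dr h ih => simp only [Tm.wsize]; omega

theorem naCF_chain : ∀ t : Tm, NaCF t → NeCF t ∨ ∃ L s, t = plug L (Tm.bang s) := by
  intro t
  induction t with
  | bang t _ => exact fun _ => Or.inr ⟨[], t, rfl⟩
  | esub t u iht ihu =>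
      intro h
      cases h with
      | ne h' => exact Or.inl h'
      | esub h1 h2 =>
          rcases iht h1 with h' | ⟨L, s, rfl⟩
          · exact Or.inl (NeCF.esub h' h2)
          · exact Or.inr ⟨u :: L, s, rfl⟩
  | var k => exact fun h => by cases h with | ne h' => exact Or.inl h'
  | app t u iht ihu => exact fun h => by cases h with | ne h' => exact Or.inl h'
  | lam t iht => exact fun h => by cases h with | ne h' => exact Or.inl h'
  | der t iht => exact fun h => by cases h with | ne h' => exact Or.inl h'

theorem nbCF_chain : ∀ t : Tm, NbCF t → NeCF t ∨ ∃ L s, t = plug L (Tm.lam s) := by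
  intro t
  induction t with
  | lam t _ => exact fun _ => Or.inr ⟨[], t, rfl⟩
  | esub t u iht ihu =>
      intro h
      cases h with
      | ne h' => exact Or.inl h'
      | esub h1 h2 =>
          rcases iht h1 with h' | ⟨L, s, rfl⟩
          · exact Or.inl (NeCF.esub h' h2)
          · exact Or.inr ⟨u :: L, s, rfl⟩
  | var k => exact fun h => by cases h with | ne h' => exact Or.inl h'
  | app t u iht ihu => exact fun h => by cases h with | ne h' => exact Or.inl h'
  | bang t iht => exact fun h => by cases h with | ne h' => exact Or.inl h'
  | der t iht => exact fun h => by cases h with | ne h' => exact Or.inl h'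

theorem NoCF.esub_ne {t u : Tm} (ht : NoCF t) (hu : NeCF u) : NoCF (Tm.esub t u) := by
  cases ht with
  | na h => exact NoCF.na (NaCF.esub h hu)
  | nb h => exact NoCF.nb (NbCF.esub h hu)

/-- classification: every term steps, has a clash, or is a clash free normal form -/
theorem classify : ∀ t : Tm,
    (∃ r t', Step r t t') ∨ (∃ s, WSub t s ∧ Clash s) ∨ NoCF t := by
  intro t
  induction t with
  | var k => exact Or.inr (Or.inr (NoCF.na (NaCF.ne (NeCF.var k))))
  | bang t _ => exact Or.inr (Or.inr (NoCF.na (NaCF.bang t)))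
  | lam t ih =>
      rcases ih with ⟨r, t', hs⟩ | ⟨s, hsub, hc⟩ | h
      · exact Or.inl ⟨r, _, Step.lam hs⟩
      · exact Or.inr (Or.inl ⟨s, WSub.lam hsub, hc⟩)
      · exact Or.inr (Or.inr (NoCF.nb (NbCF.lam h)))
  | der t ih =>
      rcases ih with ⟨r, t', hs⟩ | ⟨s, hsub, hc⟩ | h
      · exact Or.inl ⟨r, _, Step.der hs⟩
      · exact Or.inr (Or.inl ⟨s, WSub.der hsub, hc⟩)
      · cases h with
        | na ha =>
            rcases naCF_chain t ha with h' | ⟨L, s, rfl⟩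
            · exact Or.inr (Or.inr (NoCF.na (NaCF.ne (NeCF.der h'))))
            · exact Or.inl ⟨.db, _, Step.root (Root.db L s)⟩
        | nb hb =>
            rcases nbCF_chain t hb with h' | ⟨L, s, rfl⟩
            · exact Or.inr (Or.inr (NoCF.na (NaCF.ne (NeCF.der h'))))
            · exact Or.inr (Or.inl ⟨_, WSub.refl _, Clash.derLam L s⟩)
  | app t u iht ihu =>
      rcases iht with ⟨r, t', hs⟩ | ⟨s, hsub, hc⟩ | ht
      · exact Or.inl ⟨r, _, Step.appL u hs⟩
      · exact Or.inr (Or.inl ⟨s, WSub.appL u hsub, hc⟩)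
      · rcases ihu with ⟨r, u', hs⟩ | ⟨s, hsub, hc⟩ | hu
        · exact Or.inl ⟨r, _, Step.appR t hs⟩
        · exact Or.inr (Or.inl ⟨s, WSub.appR t hsub, hc⟩)
        · have hune : NeCF t →
              (∃ r s', Step r (Tm.app t u) s') ∨ (∃ s, WSub (Tm.app t u) s ∧ Clash s) ∨
                NoCF (Tm.app t u) := by
            intro hne
            cases hu with
            | na ha => exact Or.inr (Or.inr (NoCF.na (NaCF.ne (NeCF.app hne ha))))
            | nb hb =>
                rcases nbCF_chain u hb with h' | ⟨L, s, hequ⟩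
                · exact Or.inr (Or.inr (NoCF.na (NaCF.ne (NeCF.app hne (NaCF.ne h')))))
                · subst hequ
                  exact Or.inr (Or.inl ⟨_, WSub.refl _, Clash.appLam L t s⟩)
          cases ht with
          | na ha =>
              rcases naCF_chain t ha with h' | ⟨L, s, rfl⟩
              · exact hune h'
              · exact Or.inr (Or.inl ⟨_, WSub.refl _, Clash.appBang L s u⟩)
          | nb hb =>
              rcases nbCF_chain t hb with h' | ⟨L, s, rfl⟩
              · exact hune h'
              · exact Or.inl ⟨.dB, _, Step.root (Root.dB L s u)⟩
  | esub t u iht ihu =>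
      rcases ihu with ⟨r, u', hs⟩ | ⟨s, hsub, hc⟩ | hu
      · exact Or.inl ⟨r, _, Step.esubR t hs⟩
      · exact Or.inr (Or.inl ⟨s, WSub.esubR t hsub, hc⟩)
      · have hune : NeCF u →
            (∃ r s', Step r (Tm.esub t u) s') ∨ (∃ s, WSub (Tm.esub t u) s ∧ Clash s) ∨
              NoCF (Tm.esub t u) := by
          intro hne
          rcases iht with ⟨r, t', hs⟩ | ⟨s, hsub, hc⟩ | ht
          · exact Or.inl ⟨r, _, Step.esubL u hs⟩
          · exact Or.inr (Or.inl ⟨s, WSub.esubL u hsub, hc⟩)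
          · exact Or.inr (Or.inr (NoCF.esub_ne ht hne))
        cases hu with
        | na ha =>
            rcases naCF_chain u ha with h' | ⟨L, s, rfl⟩
            · exact hune h'
            · exact Or.inl ⟨.sb, _, Step.root (Root.sb L t s)⟩
        | nb hb =>
            rcases nbCF_chain u hb with h' | ⟨L, s, rfl⟩
            · exact hune h'
            · exact Or.inr (Or.inl ⟨_, WSub.refl _, Clash.esubLam L t s⟩)

/-- weak subterms of typable terms are typable -/
theorem wsub_typed {t s : Tm} (h : WSub t s) :
    ∀ {Γ : Ctx} {σ : Ty} {n : ℕ}, DerU Γ t σ n → ∃ Γ' σ' n', DerU Γ' s σ' n' := by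
  induction h with
  | refl t => exact fun h => ⟨_, _, _, h⟩
  | appL u _ ih => intro Γ σ n h; cases h with | app h1 h2 => exact ih h1
  | appR t _ ih => intro Γ σ n h; cases h with | app h1 h2 => exact ih h2
  | lam _ ih => intro Γ σ n h; cases h with | abs M h1 hM => exact ih h1
  | der _ ih => intro Γ σ n h; cases h with | dr h1 => exact ih h1
  | esubL u _ ih => intro Γ σ n h; cases h with | es h1 h2 hM => exact ih h1
  | esubR t _ ih => intro Γ σ n h; cases h with | es h1 h2 hM => exact ih h2

theorem plug_bang_mult {L : List Tm} {s : Tm} {Γ : Ctx} {σ : Ty} {n : ℕ}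
    (h : DerU Γ (plug L (Tm.bang s)) σ n) : ∃ M, σ = Ty.mult M := by
  obtain ⟨Γs, k, ms, hf, hs, rfl⟩ := plug_gen L h
  cases hs with
  | bg prs hp => exact ⟨_, rfl⟩

theorem plug_lam_arr {L : List Tm} {s : Tm} {Γ : Ctx} {σ : Ty} {n : ℕ}
    (h : DerU Γ (plug L (Tm.lam s)) σ n) : ∃ M τ, σ = Ty.arr M τ := by
  obtain ⟨Γs, k, ms, hf, hs, rfl⟩ := plug_gen L h
  cases hs with
  | abs M h1 hM => exact ⟨_, _, rfl⟩

theorem clash_untyped {s : Tm} (hc : Clash s) :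
    ∀ {Γ : Ctx} {σ : Ty} {n : ℕ}, DerU Γ s σ n → False := by
  cases hc with
  | appBang L t u =>
      intro Γ σ n h
      cases h with
      | app h1 h2 =>
          obtain ⟨M, hM⟩ := plug_bang_mult h1
          exact Ty.noConfusion hM
  | esubLam L t u =>
      intro Γ σ n h
      cases h with
      | es h1 h2 hM =>
          obtain ⟨M', τ, hM'⟩ := plug_lam_arr h2
          exact Ty.noConfusion hM'
  | derLam L u =>
      intro Γ σ n h
      cases h with
      | dr h1 =>
          obtain ⟨M', τ, hM'⟩ := plug_lam_arr h1
          exact Ty.noConfusion hM'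
  | appLam L t u =>
      intro Γ σ n h
      cases h with
      | app h1 h2 =>
          obtain ⟨M', τ, hM'⟩ := plug_lam_arr h2
          exact Ty.noConfusion hM'

/-- typability of clash free normal forms -/
theorem cf_typable : ∀ t : Tm,
    (NeCF t → ∀ σ, ∃ Γ n, DerU Γ t σ n) ∧
    (NaCF t → ∃ (M : List Ty) (Γ : Ctx) (n : ℕ), DerU Γ t (Ty.mult M) n) ∧
    (NbCF t → ∃ Γ σ n, DerU Γ t σ n) := by
  intro t
  induction t with
  | var k =>
      refine ⟨fun _ σ => ⟨_, _, DerU.ax k σ⟩, fun _ => ⟨[], _, _, DerU.ax k (Ty.mult [])⟩,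
        fun _ => ⟨_, _, _, DerU.ax k (Ty.mult [])⟩⟩
  | app t u iht ihu =>
      have key : NeCF (Tm.app t u) → ∀ σ, ∃ Γ n, DerU Γ (Tm.app t u) σ n := by
        intro h σ
        cases h with
        | app h1 h2 =>
            obtain ⟨M, Γu, nu, du⟩ := ihu.2.1 h2
            obtain ⟨Γt, nt, dt⟩ := iht.1 h1 (Ty.arr M σ)
            exact ⟨_, _, DerU.app dt du⟩
      refine ⟨key, ?_, ?_⟩
      · intro h
        cases h with
        | ne h' =>
            obtain ⟨Γ, n, d⟩ := key h' (Ty.mult [])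
            exact ⟨[], Γ, n, d⟩
      · intro h
        cases h with
        | ne h' =>
            obtain ⟨Γ, n, d⟩ := key h' (Ty.mult [])
            exact ⟨Γ, _, n, d⟩
  | lam t ih =>
      refine ⟨?_, ?_, ?_⟩
      · intro h
        cases h
      · intro h
        cases h with
        | ne h' => cases h'
      intro h
      cases h with
      | ne h' => cases h'
      | lam h' =>
          have : ∃ Γ σ n, DerU Γ t σ n := by
            cases h' with
            | na ha =>
                obtain ⟨M, Γ, n, d⟩ := ih.2.1 ha
                exact ⟨Γ, _, n, d⟩
            | nb hb => exact ih.2.2 hb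
          obtain ⟨Γ, σ, n, d⟩ := this
          exact ⟨_, _, _, DerU.abs (Γ 0).toList d (Multiset.coe_toList (Γ 0))⟩
  | bang t ih =>
      refine ⟨?_, ?_, ?_⟩
      · intro h
        cases h
      · intro _
        refine ⟨[], 0, 0, ?_⟩
        have := DerU.bg (t := t) [] (by simp)
        simpa using this
      · intro h
        cases h with
        | ne h' => cases h'
  | der t ih =>
      have key : NeCF (Tm.der t) → ∀ σ, ∃ Γ n, DerU Γ (Tm.der t) σ n := by
        intro h σ
        cases h with
        | der h' =>
            obtain ⟨Γ, n, d⟩ := ih.1 h' (Ty.mult [σ])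
            exact ⟨_, _, DerU.dr d⟩
      refine ⟨key, ?_, ?_⟩
      · intro h
        cases h with
        | ne h' =>
            obtain ⟨Γ, n, d⟩ := key h' (Ty.mult [])
            exact ⟨[], Γ, n, d⟩
      · intro h
        cases h with
        | ne h' =>
            obtain ⟨Γ, n, d⟩ := key h' (Ty.mult [])
            exact ⟨Γ, _, n, d⟩
  | esub t u iht ihu =>
      have keyU : NeCF u → ∀ Γt : Ctx, ∃ Δ nu, DerU Δ u (Ty.mult (Γt 0).toList) nu :=
        fun hne Γt => ihu.1 hne (Ty.mult (Γt 0).toList)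
      refine ⟨?_, ?_, ?_⟩
      · intro h σ
        cases h with
        | esub h1 h2 =>
            obtain ⟨Γt, nt, dt⟩ := iht.1 h1 σ
            obtain ⟨Δ, nu, du⟩ := keyU h2 Γt
            exact ⟨_, _, DerU.es dt du (Multiset.coe_toList (Γt 0))⟩
      · intro h
        cases h with
        | ne h' =>
            cases h' with
            | esub h1 h2 =>
                obtain ⟨Γt, nt, dt⟩ := iht.1 h1 (Ty.mult [])
                obtain ⟨Δ, nu, du⟩ := keyU h2 Γt
                exact ⟨[], _, _, DerU.es dt du (Multiset.coe_toList (Γt 0))⟩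
        | esub h1 h2 =>
            obtain ⟨M, Γt, nt, dt⟩ := iht.2.1 h1
            obtain ⟨Δ, nu, du⟩ := keyU h2 Γt
            exact ⟨M, _, _, DerU.es dt du (Multiset.coe_toList (Γt 0))⟩
      · intro h
        cases h with
        | ne h' =>
            cases h' with
            | esub h1 h2 =>
                obtain ⟨Γt, nt, dt⟩ := iht.1 h1 (Ty.mult [])
                obtain ⟨Δ, nu, du⟩ := keyU h2 Γt
                exact ⟨_, _, _, DerU.es dt du (Multiset.coe_toList (Γt 0))⟩
        | esub h1 h2 =>
            obtain ⟨Γt, σ, nt, dt⟩ := iht.2.2 h1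
            obtain ⟨Δ, nu, du⟩ := keyU h2 Γt
            exact ⟨_, _, _, DerU.es dt du (Multiset.coe_toList (Γt 0))⟩

theorem noCF_typable {t : Tm} (h : NoCF t) : ∃ Γ σ n, DerU Γ t σ n := by
  cases h with
  | na ha =>
      rcases naCF_chain t ha with h' | ⟨L, s, rfl⟩
      · obtain ⟨Γ, n, d⟩ := (cf_typable _).1 h' (Ty.mult [])
        exact ⟨Γ, _, n, d⟩
      · obtain ⟨M, Γ, n, d⟩ := (cf_typable _).2.1 ha
        exact ⟨Γ, _, n, d⟩
  | nb hb => exact (cf_typable t).2.2 hb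


open Tm

theorem typable_normalizes : ∀ (n : ℕ) (t : Tm), (∃ Γ σ, DerU Γ t σ n) →
    ∃ p, NoCF p ∧ Relation.ReflTransGen StepW t p := by
  intro n
  induction n using Nat.strong_induction_on with
  | _ n ih =>
      rintro t ⟨Γ, σ, h⟩
      rcases classify t with ⟨r, t', hs⟩ | ⟨s, hsub, hc⟩ | hcf
      · obtain ⟨n', d, e⟩ := stepSR hs h
        obtain ⟨p, hp, hred⟩ := ih n' (by omega) t' ⟨_, _, d⟩
        exact ⟨p, hp, Relation.ReflTransGen.head ⟨r, hs⟩ hred⟩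
      · obtain ⟨Γ', σ', n', d⟩ := wsub_typed hsub h
        exact (clash_untyped hc d).elim
      · exact ⟨t, hcf, Relation.ReflTransGen.refl⟩

theorem red_expansion {t p : Tm} (hred : Relation.ReflTransGen StepW t p) :
    (∃ Γ σ n, DerU Γ p σ n) → ∃ Γ σ n, DerU Γ t σ n := by
  induction hred using Relation.ReflTransGen.head_induction_on with
  | refl => exact id
  | head hstep _ ih =>
      intro hp
      obtain ⟨Γ, σ, n, d⟩ := ih hp
      obtain ⟨r, hs⟩ := hstep
      obtain ⟨n', d'⟩ := stepSE hs d
      exact ⟨_, _, _, d'⟩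

theorem quantitative : ∀ {t : Tm} {be : ℕ × ℕ} {p : Tm}, RedCnt t be p →
    ∀ {Γ : Ctx} {τ : Ty} {n : ℕ}, DerU Γ t τ n → n ≥ be.1 + be.2 + Tm.wsize p := by
  intro t be p h
  induction h with
  | refl t =>
      intro Γ τ n h
      simpa using wsize_le h
  | db hs _ ih =>
      intro Γ τ n h
      obtain ⟨n', d, e⟩ := stepSR hs h
      have h2 := ih d
      simp only [Prod.fst, Prod.snd] at h2 ⊢
      simp at h2 ⊢
      omega
  | ex hs _ ih =>
      intro Γ τ n h
      obtain ⟨n', d, e⟩ : ∃ n', DerU Γ _ τ n' ∧ n' + 1 ≤ n :=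
        hs.elim (fun hs => stepSR hs h) (fun hs => stepSR hs h)
      have h2 := ih d
      simp at h2 ⊢
      omega


/-- **Soundness and completeness of system 𝒰** (Theorem 3): `t` is
𝒰-typable iff `t` `→w`-normalises to a weak clash free normal form `p`.
Moreover, if `Γ ⊢ t : τ` has a derivation of size `n` and
`t →w* p` (with `p ∈ no_wcf`) using `b` dB-steps and `e` s!/d!-steps, then
`n ≥ b + e + |p|_w`. -/
theorem soundness_completeness (t : Tm) :
    ((∃ (Γ : Ctx) (σ : Ty) (n : ℕ), DerU Γ t σ n) ↔
      ∃ p : Tm, NoCF p ∧ Relation.ReflTransGen StepW t p) ∧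
    (∀ (Γ : Ctx) (τ : Ty) (n : ℕ) (p : Tm) (b e : ℕ),
      DerU Γ t τ n → NoCF p → RedCnt t (b, e) p →
      n ≥ b + e + Tm.wsize p) := by
  constructor
  · constructor
    · rintro ⟨Γ, σ, n, h⟩
      exact typable_normalizes n t ⟨Γ, σ, h⟩
    · rintro ⟨p, hp, hred⟩
      exact red_expansion hred (noCF_typable hp)
  · intro Γ τ n p b e h hp hred
    exact quantitative hred h
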